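/- arXiv:2602.19879 — 4 statements merged into one kernel-verified Lean document; each statement's English description precedes it below -/
import Mathlib

section
/- The canonical merge plan of a connected edge-weighted graph G with terminal set R has value equal to half the cost of a minimum spanning tree on the terminals, i.e. value(M) = TMST/2, where TMST is the minimum cost of a spanning tree on R in the metric closure of G. -/
/-- A merge plan on a terminal set `R`: a family of partitions of `R`
(given as setoids, one for each time `t : ℝ`) such that two distinct
terminals `x, y` lie in different parts of the partition at time `t`
if and only if `0 ≤ t ≤ mergeTime x y`. -/
structure MergePlan (R : Type*) where
  rel : ℝ → Setoid R
  mergeTime : R → R → ℝ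
  mergeTime_self : ∀ x : R, mergeTime x x = 0
  mergeTime_nonneg : ∀ x y : R, x ≠ y → 0 ≤ mergeTime x y
  rel_iff : ∀ (t : ℝ) (x y : R), x ≠ y →
    (¬ (rel t).r x y ↔ 0 ≤ t ∧ t ≤ mergeTime x y)

/-- The local value of a merge plan for a terminal set `X`:
`∫_0^∞ (|{parts meeting X}| - 1) dt`. -/
noncomputable def MergePlan.localValue {R : Type*} (M : MergePlan R) (X : Set R) : ℝ :=
  ∫ t in Set.Ioi (0 : ℝ),
    ((Set.ncard (Quotient.mk (M.rel t) '' X) : ℝ) - 1)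

/-- The value of a merge plan: `∫_0^∞ (|S^t| - 1) dt`. -/
noncomputable def MergePlan.value {R : Type*} (M : MergePlan R) : ℝ :=
  M.localValue Set.univ
/-- `minimax u x y` is the minimum over `x`-`y` paths `P` in the complete graph on `R`
of the maximum of `u` over the edges of `P`. Paths are encoded as lists of vertices with
distinct consecutive entries. -/
noncomputable def minimax {R : Type*} (u : Sym2 R → ℝ) (x y : R) : ℝ :=
  sInf {m : ℝ | ∃ l : List R,
    List.Chain' (fun a b => a ≠ b) (x :: l) ∧
    (x :: l).getLast (List.cons_ne_nil x l) = y ∧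
    m = (((x :: l).zip l).map fun p => u s(p.1, p.2)).foldr max 0}
/-- The minimum cost of a spanning tree of the complete graph on `R`
with respect to the edge costs `u`. -/
noncomputable def mstCost {R : Type*} (u : Sym2 R → ℝ) : ℝ :=
  sInf {w : ℝ | ∃ T : Finset (Sym2 R), (∀ e ∈ T, ¬ e.IsDiag) ∧
    (SimpleGraph.fromEdgeSet (↑T : Set (Sym2 R))).Connected ∧
    T.card + 1 = Nat.card R ∧ w = ∑ e ∈ T, u e}
/-- Shortest-path distance in the weighted graph `(G, c)`, as a function on unordered pairs. -/
noncomputable def wdist {V : Type*} (G : SimpleGraph V) (c : Sym2 V → ℝ) : Sym2 V → ℝ :=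
  Sym2.lift ⟨fun x y => sInf {d : ℝ |
      (∃ p : G.Walk x y, d = (p.edges.map c).sum) ∨
      (∃ p : G.Walk y x, d = (p.edges.map c).sum)},
    fun x y => congrArg sInf (Set.ext fun _ => or_comm)⟩

/-- The metric closure of `(G, c)` restricted to a terminal set `R`. -/
noncomputable def restrictDist {V : Type*} (G : SimpleGraph V) (c : Sym2 V → ℝ)
    (R : Finset V) : Sym2 {v : V // v ∈ R} → ℝ :=
  Sym2.lift ⟨fun a b => wdist G c s((a : V), (b : V)), fun a b => by show wdist G c s((a : V), (b : V)) = wdist G c s((b : V), (a : V)); rw [Sym2.eq_swap]⟩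


open Relation

section Classes
variable {α : Type*} [DecidableEq α]
set_option linter.unusedSectionVars false

/-- single edge step along an edge set -/
def estep (F : Finset (Sym2 α)) (a b : α) : Prop := a ≠ b ∧ s(a, b) ∈ F

/-- reachability along an edge set -/
def ereach (F : Finset (Sym2 α)) : α → α → Prop := ReflTransGen (estep F)

lemma estep_symm {F : Finset (Sym2 α)} {a b : α} (h : estep F a b) : estep F b a :=
  ⟨h.1.symm, by rw [Sym2.eq_swap]; exact h.2⟩

lemma ereach_refl {F : Finset (Sym2 α)} (a : α) : ereach F a a := ReflTransGen.refl

lemma ereach_symm {F : Finset (Sym2 α)} {a b : α} (h : ereach F a b) : ereach F b a := by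
  induction h with
  | refl => exact ReflTransGen.refl
  | tail _ h2 ih => exact ReflTransGen.head (estep_symm h2) ih

lemma ereach_trans {F : Finset (Sym2 α)} {a b c : α} (h : ereach F a b) (h' : ereach F b c) :
    ereach F a c := ReflTransGen.trans h h'

def ereachSetoid (F : Finset (Sym2 α)) : Setoid α :=
  ⟨ereach F, ⟨ereach_refl, ereach_symm, ereach_trans⟩⟩

/-- number of connected components of the edge set `F` -/
noncomputable def nclasses (F : Finset (Sym2 α)) : ℕ := Nat.card (Quotient (ereachSetoid F))

lemma ereach_mono {F G : Finset (Sym2 α)} (h : F ⊆ G) {a b : α} (hr : ereach F a b) :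
    ereach G a b :=
  ReflTransGen.mono (r := estep F) (p := estep G) (fun a b (hs : estep F a b) => (⟨hs.1, h hs.2⟩ : estep G a b)) _ _ hr

lemma ereachSetoid_r {F : Finset (Sym2 α)} {a b : α} :
    (ereachSetoid F).r a b ↔ ereach F a b := Iff.rfl

/-- general setoid comparison -/
lemma card_quotient_le_of_le [Finite α] {s₁ s₂ : Setoid α} (h : ∀ a b, s₁.r a b → s₂.r a b) :
    Nat.card (Quotient s₂) ≤ Nat.card (Quotient s₁) := by
  refine Nat.card_le_card_of_surjective
    (Quotient.lift (fun a => (Quotient.mk s₂ a : Quotient s₂))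
      (fun a b hab => Quotient.sound (h a b hab))) ?_
  intro q
  obtain ⟨a, rfl⟩ := Quotient.exists_rep q
  exact ⟨Quotient.mk _ a, rfl⟩

lemma nclasses_le_of_subset [Finite α] {F G : Finset (Sym2 α)} (h : F ⊆ G) :
    nclasses G ≤ nclasses F :=
  card_quotient_le_of_le (fun _ _ hab => ereach_mono h hab)

lemma nclasses_empty [Finite α] : nclasses (∅ : Finset (Sym2 α)) = Nat.card α := by
  have key : ∀ a b : α, ereach ∅ a b → a = b := by
    intro a b h
    induction h with
    | refl => rfl
    | tail _ h2 _ => exact absurd h2.2 (Finset.notMem_empty _)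
  refine Nat.card_congr (Equiv.ofBijective (Quotient.lift id (fun a b hab => key a b hab)) ?_)
  constructor
  · intro q q' hq
    obtain ⟨a, rfl⟩ := Quotient.exists_rep q
    obtain ⟨b, rfl⟩ := Quotient.exists_rep q'
    exact Quotient.sound (by rw [show a = b from hq])
  · intro a; exact ⟨Quotient.mk _ a, rfl⟩

lemma ereach_insert_cases {F : Finset (Sym2 α)} {x y a b : α}
    (h : ereach (insert s(x, y) F) a b) :
    ereach F a b ∨ (ereach F a x ∧ ereach F y b) ∨ (ereach F a y ∧ ereach F x b) := by
  induction h with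
  | refl => exact Or.inl ReflTransGen.refl
  | @tail c d _ h2 ih =>
    rcases Finset.mem_insert.mp h2.2 with he | he
    · rcases Sym2.eq_iff.mp he with ⟨rfl, rfl⟩ | ⟨rfl, rfl⟩
      · rcases ih with h' | ⟨h1, h2'⟩ | ⟨h1, h2'⟩
        · exact Or.inr (Or.inl ⟨h', ereach_refl _⟩)
        · exact Or.inr (Or.inl ⟨h1, ereach_refl _⟩)
        · exact Or.inl h1
      · rcases ih with h' | ⟨h1, h2'⟩ | ⟨h1, h2'⟩
        · exact Or.inr (Or.inr ⟨h', ereach_refl _⟩)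
        · exact Or.inl h1
        · exact Or.inr (Or.inr ⟨h1, ereach_refl _⟩)
    · have step : ereach F c d := ReflTransGen.single ⟨h2.1, he⟩
      rcases ih with h' | ⟨h1, h2'⟩ | ⟨h1, h2'⟩
      · exact Or.inl (ereach_trans h' step)
      · exact Or.inr (Or.inl ⟨h1, ereach_trans h2' step⟩)
      · exact Or.inr (Or.inr ⟨h1, ereach_trans h2' step⟩)

lemma nclasses_le_insert_add_one [Finite α] (F : Finset (Sym2 α)) (e : Sym2 α) :
    nclasses F ≤ nclasses (insert e F) + 1 := by
  induction e using Sym2.ind with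
  | _ x y =>
  classical
  set Qi := Quotient (ereachSetoid (insert s(x,y) F)) with hQi
  let f : Quotient (ereachSetoid F) → Qi :=
    Quotient.lift (fun a => (Quotient.mk _ a : Qi))
      (fun a b hab => Quotient.sound (ereach_mono (Finset.subset_insert _ _) hab))
  set qx : Quotient (ereachSetoid F) := Quotient.mk _ x with hqx
  let g : Quotient (ereachSetoid F) → Qi ⊕ Unit :=
    fun q => if q = qx then Sum.inr () else Sum.inl (f q)
  have hginj : Function.Injective g := by
    intro q q' hq
    obtain ⟨a, rfl⟩ := Quotient.exists_rep q
    obtain ⟨b, rfl⟩ := Quotient.exists_rep q'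
    by_cases h1 : (Quotient.mk _ a : Quotient (ereachSetoid F)) = qx <;>
      by_cases h2 : (Quotient.mk _ b : Quotient (ereachSetoid F)) = qx
    · exact h1.trans h2.symm
    · simp only [g, if_pos h1, if_neg h2] at hq
      exact absurd hq (by simp)
    · simp only [g, if_neg h1, if_pos h2] at hq
      exact absurd hq (by simp)
    · simp only [g, if_neg h1, if_neg h2] at hq
      have hq' : f (Quotient.mk _ a) = f (Quotient.mk _ b) := Sum.inl.inj hq
      have : ereach (insert s(x,y) F) a b := Quotient.exact hq'
      rcases ereach_insert_cases this with h' | ⟨ha, hb⟩ | ⟨ha, hb⟩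
      · exact Quotient.sound h'
      · exact absurd (Quotient.sound ha : (Quotient.mk _ a : Quotient (ereachSetoid F)) = qx) h1
      · exact absurd ((Quotient.sound (ereach_symm hb)) :
          (Quotient.mk _ b : Quotient (ereachSetoid F)) = qx) h2
  have := Nat.card_le_card_of_injective g hginj
  rw [Nat.card_sum] at this
  simpa [nclasses, Nat.card_unique] using this

lemma nclasses_insert_eq [Finite α] {F : Finset (Sym2 α)} {x y : α} (hxy : x ≠ y)
    (h : ¬ ereach F x y) :
    nclasses (insert s(x,y) F) + 1 = nclasses F := by
  classical
  have hle := nclasses_le_insert_add_one F s(x,y)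
  have hlt : nclasses (insert s(x,y) F) < nclasses F := by
    set Qi := Quotient (ereachSetoid (insert s(x,y) F)) with hQi
    let f : Quotient (ereachSetoid F) → Qi :=
      Quotient.lift (fun a => (Quotient.mk _ a : Qi))
        (fun a b hab => Quotient.sound (ereach_mono (Finset.subset_insert _ _) hab))
    have hsurj : Function.Surjective f := by
      intro q; obtain ⟨a, rfl⟩ := Quotient.exists_rep q; exact ⟨Quotient.mk _ a, rfl⟩
    have i1 : Fintype (Quotient (ereachSetoid F)) := Fintype.ofFinite _
    have i2 : Fintype Qi := Fintype.ofFinite _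
    refine lt_of_le_of_ne (Nat.card_le_card_of_surjective f hsurj) ?_
    intro hcard
    have hcard' : Fintype.card (Quotient (ereachSetoid F)) = Fintype.card Qi := by
      have e1 : nclasses (insert s(x,y) F) = Fintype.card Qi := Nat.card_eq_fintype_card
      have e2 : nclasses F = Fintype.card (Quotient (ereachSetoid F)) := Nat.card_eq_fintype_card
      omega
    have hbij : Function.Bijective f :=
      (Fintype.bijective_iff_surjective_and_card f).mpr ⟨hsurj, hcard'⟩
    have : (Quotient.mk _ x : Quotient (ereachSetoid F)) = Quotient.mk _ y := by
      apply hbij.injective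
      exact Quotient.sound (ReflTransGen.single ⟨hxy, Finset.mem_insert_self _ _⟩)
    exact h (Quotient.exact this)
  omega

lemma nclasses_add_card_mono [Finite α] {F G : Finset (Sym2 α)} (h : F ⊆ G) :
    nclasses F + F.card ≤ nclasses G + G.card := by
  classical
  suffices key : ∀ (n : ℕ) (F : Finset (Sym2 α)), F ⊆ G → (G \ F).card = n →
      nclasses F + F.card ≤ nclasses G + G.card by
    exact key _ F h rfl
  intro n
  induction n with
  | zero =>
    intro F hFG hn
    have hGF : G ⊆ F := by
      intro e he
      by_contra hef
      have : e ∈ G \ F := Finset.mem_sdiff.mpr ⟨he, hef⟩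
      have := Finset.card_eq_zero.mp hn
      simp [this] at *
    rw [Finset.Subset.antisymm hFG hGF]
  | succ n ih =>
    intro F hFG hn
    obtain ⟨a, ha⟩ := Finset.card_pos.mp (by omega : 0 < (G \ F).card)
    obtain ⟨haG, haF⟩ := Finset.mem_sdiff.mp ha
    have hsub : insert a F ⊆ G := Finset.insert_subset haG hFG
    have hcard : (G \ insert a F).card = n := by
      rw [Finset.sdiff_insert, Finset.card_erase_of_mem (Finset.mem_sdiff.mpr ⟨haG, haF⟩), hn]
      omega
    have hstep := ih (insert a F) hsub hcard
    have h1 : nclasses F ≤ nclasses (insert a F) + 1 := nclasses_le_insert_add_one F a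
    have h2 : (insert a F).card = F.card + 1 := Finset.card_insert_of_notMem haF
    omega

lemma card_le_nclasses_add_card [Finite α] (F : Finset (Sym2 α)) :
    Nat.card α ≤ nclasses F + F.card := by
  have := nclasses_add_card_mono (Finset.empty_subset F)
  rwa [nclasses_empty, Finset.card_empty, Nat.add_zero] at this

lemma nclasses_eq_one [Finite α] [Nonempty α] {F : Finset (Sym2 α)}
    (h : ∀ x y : α, ereach F x y) : nclasses F = 1 := by
  have hs : Subsingleton (Quotient (ereachSetoid F)) := by
    constructor
    intro q q'
    obtain ⟨a, rfl⟩ := Quotient.exists_rep q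
    obtain ⟨b, rfl⟩ := Quotient.exists_rep q'
    exact Quotient.sound (h a b)
  have hne : Nonempty (Quotient (ereachSetoid F)) := by
    obtain ⟨a⟩ := ‹Nonempty α›; exact ⟨Quotient.mk _ a⟩
  have : Unique (Quotient (ereachSetoid F)) := uniqueOfSubsingleton hne.some
  exact Nat.card_unique

end Classes

section Kruskal
variable {α : Type*} [DecidableEq α] [Fintype α] [Nonempty α]
set_option linter.unusedSectionVars false

lemma kruskal_aux (u : Sym2 α → ℝ) :
    ∀ (L : List (Sym2 α)) (F : Finset (Sym2 α)),
      List.Pairwise (fun e f => u e ≤ u f) L →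
      (∀ f ∈ F, ∀ e ∈ L, u f ≤ u e) →
      (∀ f ∈ F, ¬ f.IsDiag) →
      nclasses F + F.card = Nat.card α →
      ∃ T : Finset (Sym2 α), F ⊆ T ∧ (∀ f ∈ T, ¬ f.IsDiag) ∧
        nclasses T + T.card = Nat.card α ∧
        (∀ x y : α, s(x, y) ∈ L → x ≠ y →
          ereach (T.filter fun f => u f ≤ u s(x, y)) x y) := by
  classical
  intro L
  induction L with
  | nil =>
    intro F _ _ hd hcn
    exact ⟨F, Finset.Subset.refl F, hd, hcn, fun x y h => absurd h List.not_mem_nil⟩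
  | cons e L ih =>
    intro F hsort hFle hd hcn
    induction e using Sym2.ind with
    | _ a b =>
    have hsort' : List.Pairwise (fun e f => u e ≤ u f) L := hsort.of_cons
    have hhead : ∀ f ∈ L, u s(a,b) ≤ u f := fun f hf => (List.pairwise_cons.mp hsort).1 f hf
    by_cases hre : ereach F a b
    · -- skip the edge
      obtain ⟨T, hFT, hTd, hTc, hTr⟩ := ih F hsort'
        (fun f hf e' he' => hFle f hf e' (List.mem_cons_of_mem _ he')) hd hcn
      refine ⟨T, hFT, hTd, hTc, ?_⟩
      intro x y hxy hne
      rcases List.mem_cons.mp hxy with hxy | hxy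
      · -- s(x,y) = s(a,b): a b connected in F, all F edges ≤ u s(a,b)
        have hsub : F ⊆ T.filter fun f => u f ≤ u s(x, y) := by
          intro f hf
          refine Finset.mem_filter.mpr ⟨hFT hf, ?_⟩
          rw [hxy]
          exact hFle f hf s(a,b) List.mem_cons_self
        have hab : ereach (T.filter fun f => u f ≤ u s(x, y)) a b := ereach_mono hsub hre
        rcases Sym2.eq_iff.mp hxy with ⟨rfl, rfl⟩ | ⟨rfl, rfl⟩
        · exact hab
        · exact ereach_symm hab
      · exact hTr x y hxy hne
    · -- add the edge
      have hne : a ≠ b := by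
        intro hab; exact hre (hab ▸ ereach_refl a)
      have heF : s(a, b) ∉ F := fun hmem => hre (ReflTransGen.single ⟨hne, hmem⟩)
      have hcn' : nclasses (insert s(a,b) F) + (insert s(a,b) F).card = Nat.card α := by
        rw [Finset.card_insert_of_notMem heF]
        have := nclasses_insert_eq hne hre
        omega
      obtain ⟨T, hFT, hTd, hTc, hTr⟩ := ih (insert s(a,b) F) hsort'
        (by
          intro f hf e' he'
          rcases Finset.mem_insert.mp hf with rfl | hf
          · exact hhead e' he'
          · exact hFle f hf e' (List.mem_cons_of_mem _ he'))
        (by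
          intro f hf
          rcases Finset.mem_insert.mp hf with rfl | hf
          · exact Sym2.mk_isDiag_iff.not.mpr hne
          · exact hd f hf)
        hcn'
      have hFT' : F ⊆ T := fun f hf => hFT (Finset.mem_insert_of_mem hf)
      refine ⟨T, hFT', hTd, hTc, ?_⟩
      intro x y hxy hnexy
      rcases List.mem_cons.mp hxy with hxy | hxy
      · have hmem : s(a,b) ∈ T.filter fun f => u f ≤ u s(x, y) :=
          Finset.mem_filter.mpr ⟨hFT (Finset.mem_insert_self _ _), by rw [hxy]⟩
        have hab : ereach (T.filter fun f => u f ≤ u s(x, y)) a b :=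
          ReflTransGen.single ⟨hne, hmem⟩
        rcases Sym2.eq_iff.mp hxy with ⟨rfl, rfl⟩ | ⟨rfl, rfl⟩
        · exact hab
        · exact ereach_symm hab
      · exact hTr x y hxy hnexy

/-- Kruskal's algorithm: a spanning forest compatible with all thresholds. -/
lemma exists_kruskal (u : Sym2 α → ℝ) :
    ∃ T : Finset (Sym2 α), (∀ f ∈ T, ¬ f.IsDiag) ∧
      nclasses T + T.card = Nat.card α ∧
      (∀ x y : α, x ≠ y → ereach (T.filter fun f => u f ≤ u s(x, y)) x y) := by
  classical
  set L := (Finset.univ : Finset (Sym2 α)).toList.mergeSort (fun e f => decide (u e ≤ u f))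
    with hL
  have hsorted : List.Pairwise (fun e f => u e ≤ u f) L := by
    have := List.pairwise_mergeSort (le := fun e f => decide (u e ≤ u f))
      (fun a b c hab hbc => by
        simp only [decide_eq_true_eq] at *; exact le_trans hab hbc)
      (fun a b => by simp only [Bool.or_eq_true, decide_eq_true_eq]; exact le_total _ _)
      (Finset.univ : Finset (Sym2 α)).toList
    exact this.imp (fun h => by simpa using h)
  have hmem : ∀ e : Sym2 α, e ∈ L := by
    intro e
    have : e ∈ (Finset.univ : Finset (Sym2 α)).toList := by
      rw [Finset.mem_toList]; exact Finset.mem_univ e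
    rw [hL]
    exact (List.mergeSort_perm _ _).symm.subset this
  obtain ⟨T, _, hTd, hTc, hTr⟩ := kruskal_aux u L ∅ hsorted
    (by intro f hf; exact absurd hf (Finset.notMem_empty f))
    (by intro f hf; exact absurd hf (Finset.notMem_empty f))
    (by rw [nclasses_empty, Finset.card_empty, Nat.add_zero])
  exact ⟨T, hTd, hTc, fun x y hxy => hTr x y (hmem _) hxy⟩

end Kruskal


-- extra generic lemma
lemma ereach_of_forall_estep {α : Type*} [DecidableEq α] {F F' : Finset (Sym2 α)}
    (h : ∀ a b, estep F' a b → ereach F a b) {x y : α} (hr : ereach F' x y) :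
    ereach F x y := by
  induction hr with
  | refl => exact ereach_refl x
  | tail _ h2 ih => exact ereach_trans ih (h _ _ h2)

section Integration
open MeasureTheory

lemma indicator_integrableOn (a : ℝ) :
    IntegrableOn ((Set.Ioc (0:ℝ) a).indicator (fun _ => (1:ℝ))) (Set.Ioi 0) := by
  rw [IntegrableOn, integrable_indicator_iff measurableSet_Ioc]
  refine (integrableOn_const_iff (C := (1:ℝ))).mpr (Or.inr ?_)
  rw [Measure.restrict_apply measurableSet_Ioc]
  refine lt_of_le_of_lt (measure_mono Set.inter_subset_left) ?_
  rw [Real.volume_Ioc]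
  exact ENNReal.ofReal_lt_top

lemma integral_indicator_Ioc (a : ℝ) (ha : 0 ≤ a) :
    ∫ t in Set.Ioi (0:ℝ), (Set.Ioc (0:ℝ) a).indicator (fun _ => (1:ℝ)) t = a := by
  rw [MeasureTheory.setIntegral_indicator measurableSet_Ioc,
    show Set.Ioi (0:ℝ) ∩ Set.Ioc 0 a = Set.Ioc 0 a from
      Set.inter_eq_self_of_subset_right Set.Ioc_subset_Ioi_self,
    MeasureTheory.setIntegral_const, Real.volume_real_Ioc_of_le ha, smul_eq_mul, mul_one,
    sub_zero]

lemma integral_sum_indicator {ι : Type*} (E : Finset ι) (w : ι → ℝ) (hw : ∀ e ∈ E, 0 ≤ w e) :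
    ∫ t in Set.Ioi (0:ℝ), (∑ e ∈ E, (Set.Ioc (0:ℝ) (w e)).indicator (fun _ => (1:ℝ)) t)
      = ∑ e ∈ E, w e := by
  rw [MeasureTheory.integral_finset_sum E (fun e _ => indicator_integrableOn (w e))]
  exact Finset.sum_congr rfl fun e he => integral_indicator_Ioc (w e) (hw e he)

end Integration


section MinimaxLemmas
variable {α : Type*}

lemma foldr_max_nonneg (l : List ℝ) : 0 ≤ l.foldr max 0 := by
  induction l with
  | nil => exact le_refl 0
  | cons a l ih => exact le_trans ih (le_max_right a _)

lemma minimax_set_nonempty (u : Sym2 α → ℝ) (x y : α) (h : x ≠ y) :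
    ∃ m, m ∈ {m : ℝ | ∃ l : List α,
    List.Chain' (fun a b => a ≠ b) (x :: l) ∧
    (x :: l).getLast (List.cons_ne_nil x l) = y ∧
    m = (((x :: l).zip l).map fun p => u s(p.1, p.2)).foldr max 0} :=
  ⟨_, ⟨[y], List.isChain_pair.mpr h, rfl, rfl⟩⟩

lemma minimax_lt_iff (u : Sym2 α → ℝ) (x y : α) (t : ℝ) (ht : 0 < t) :
    minimax u x y < t ↔
      Relation.ReflTransGen (fun a b => a ≠ b ∧ u s(a, b) < t) x y := by
  constructor
  · intro h
    have hne : Set.Nonempty {m : ℝ | ∃ l : List α,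
        List.Chain' (fun a b => a ≠ b) (x :: l) ∧
        (x :: l).getLast (List.cons_ne_nil x l) = y ∧
        m = (((x :: l).zip l).map fun p => u s(p.1, p.2)).foldr max 0} := by
      by_cases hxy : x = y
      · exact ⟨0, ⟨[], List.isChain_singleton x, hxy, rfl⟩⟩
      · obtain ⟨m, hm⟩ := minimax_set_nonempty u x y hxy; exact ⟨m, hm⟩
    obtain ⟨m, ⟨l, hch, hlast, hval⟩, hmt⟩ := exists_lt_of_csInf_lt hne h
    subst hval
    clear h hne
    induction l generalizing x with
    | nil =>
      simp only [List.getLast_singleton] at hlast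
      subst hlast
      exact Relation.ReflTransGen.refl
    | cons z l ih =>
      have hxz : x ≠ z := (List.isChain_cons_cons.mp hch).1
      have hch' : List.Chain' (fun a b => a ≠ b) (z :: l) := (List.isChain_cons_cons.mp hch).2
      have hlast' : (z :: l).getLast (List.cons_ne_nil z l) = y := by
        rw [← hlast]
        exact (List.getLast_cons (List.cons_ne_nil z l)).symm
      rw [List.zip_cons_cons, List.map_cons, List.foldr_cons] at hmt
      have h1 : u s(x, z) < t := lt_of_le_of_lt (le_max_left _ _) hmt
      have h2 : (((z :: l).zip l).map fun p => u s(p.1, p.2)).foldr max 0 < t :=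
        lt_of_le_of_lt (le_max_right _ _) hmt
      exact Relation.ReflTransGen.head ⟨hxz, h1⟩ (ih z hch' hlast' h2)
  · intro h
    induction h using Relation.ReflTransGen.head_induction_on with
    | refl =>
      refine lt_of_le_of_lt (csInf_le ⟨0, ?_⟩ ?_) ht
      · intro m hm
        obtain ⟨l, _, _, hval⟩ := hm
        rw [hval]
        exact foldr_max_nonneg _
      · exact ⟨[], List.isChain_singleton y, rfl, rfl⟩
    | @head a c hac _ ihc =>
      have hnec : Set.Nonempty {m : ℝ | ∃ l : List α,
          List.Chain' (fun a b => a ≠ b) (c :: l) ∧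
          (c :: l).getLast (List.cons_ne_nil c l) = y ∧
          m = (((c :: l).zip l).map fun p => u s(p.1, p.2)).foldr max 0} := by
        by_cases hcy : c = y
        · exact ⟨0, ⟨[], List.isChain_singleton c, hcy, rfl⟩⟩
        · obtain ⟨m, hm⟩ := minimax_set_nonempty u c y hcy; exact ⟨m, hm⟩
      obtain ⟨m, ⟨l, hch, hlast, hval⟩, hmt⟩ := exists_lt_of_csInf_lt hnec ihc
      refine lt_of_le_of_lt (csInf_le ?_ (⟨c :: l, ?_, ?_, rfl⟩ :
        _ ∈ {m : ℝ | ∃ l' : List α,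
          List.Chain' (fun a b => a ≠ b) (a :: l') ∧
          (a :: l').getLast (List.cons_ne_nil a l') = y ∧
          m = (((a :: l').zip l').map fun p => u s(p.1, p.2)).foldr max 0})) ?_
      · refine ⟨0, fun m' hm' => ?_⟩
        obtain ⟨l', _, _, hval'⟩ := hm'
        rw [hval']; exact foldr_max_nonneg _
      · exact List.isChain_cons_cons.mpr ⟨hac.1, hch⟩
      · rw [← hlast]
        exact (List.getLast_cons (List.cons_ne_nil c l)).symm ▸ rfl
      · rw [List.zip_cons_cons, List.map_cons, List.foldr_cons]
        exact max_lt hac.2 (by rw [hval] at hmt; exact hmt)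

end MinimaxLemmas

lemma wdist_nonneg {V : Type*} (G : SimpleGraph V) (c : Sym2 V → ℝ)
    (hc : ∀ e ∈ G.edgeSet, 0 < c e) (e : Sym2 V) : 0 ≤ wdist G c e := by
  induction e using Sym2.ind with
  | _ x y =>
  have : wdist G c s(x, y) = sInf {d : ℝ |
      (∃ p : G.Walk x y, d = (p.edges.map c).sum) ∨
      (∃ p : G.Walk y x, d = (p.edges.map c).sum)} := rfl
  rw [this]
  apply Real.sInf_nonneg
  rintro d (⟨p, rfl⟩ | ⟨p, rfl⟩) <;>
  · apply List.sum_nonneg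
    intro r hr
    obtain ⟨e', he', rfl⟩ := List.mem_map.mp hr
    exact le_of_lt (hc e' (p.edges_subset_edgeSet he'))

/-- The canonical merge plan of a connected edge-weighted graph `G`
with terminal set `R` (the merge plan whose merge times are the min-max, over terminal
paths, of half the shortest-path distance) has value `TMST / 2`, where `TMST` is the
minimum spanning tree cost on the terminals in the metric closure of `G`. -/
theorem canonical_mergePlan_value_eq_half_TMST {V : Type*} [Fintype V]
    (G : SimpleGraph V) (hG : G.Connected)
    (c : Sym2 V → ℝ) (hc : ∀ e ∈ G.edgeSet, 0 < c e)
    (R : Finset V) (hR : R.Nonempty)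
    (M : MergePlan {v : V // v ∈ R})
    (hM : ∀ x y : {v : V // v ∈ R}, x ≠ y →
      M.mergeTime x y = minimax (fun e => restrictDist G c R e / 2) x y) :
    M.value = mstCost (restrictDist G c R) / 2 := by
  classical
  haveI : Nonempty {v : V // v ∈ R} := ⟨⟨hR.choose, hR.choose_spec⟩⟩
  set u : Sym2 {v : V // v ∈ R} → ℝ := fun e => restrictDist G c R e / 2 with hu
  have hu0 : ∀ e, 0 ≤ u e := by
    intro e
    induction e using Sym2.ind with
    | _ a b =>
    have : restrictDist G c R s(a, b) = wdist G c s((a : V), (b : V)) := rfl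
    have h0 : 0 ≤ restrictDist G c R s(a, b) := this ▸ wdist_nonneg G c hc _
    simpa [hu] using by positivity
  obtain ⟨T, hTd, hTc, hTr⟩ := exists_kruskal u
  set n := Nat.card {v : V // v ∈ R} with hn
  -- reachability via T is total
  have htot : ∀ x y : {v : V // v ∈ R}, ereach T x y := by
    intro x y
    by_cases h : x = y
    · exact h ▸ ereach_refl x
    · exact ereach_mono (Finset.filter_subset _ _) (hTr x y h)
  have hcls1 : nclasses T = 1 := nclasses_eq_one htot
  have hcardT : T.card + 1 = n := by
    have := hTc; omega
  have hconn : (SimpleGraph.fromEdgeSet (↑T : Set (Sym2 {v : V // v ∈ R}))).Connected := by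
    have pre : (SimpleGraph.fromEdgeSet
        (↑T : Set (Sym2 {v : V // v ∈ R}))).Preconnected := by
      intro x y
      rw [SimpleGraph.reachable_iff_reflTransGen]
      exact Relation.ReflTransGen.mono (r := estep T)
        (fun a b (hs : estep T a b) => (SimpleGraph.fromEdgeSet_adj _).mpr ⟨by exact_mod_cast hs.2, hs.1⟩)
        _ _ (htot x y)
    exact ⟨pre⟩
  -- threshold reachability transfer
  have hstep_to : ∀ (t : ℝ) (x y : {v : V // v ∈ R}),
      Relation.ReflTransGen (fun a b => a ≠ b ∧ u s(a, b) < t) x y →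
      ereach (T.filter fun f => u f < t) x y := by
    intro t x y h
    induction h with
    | refl => exact ereach_refl x
    | @tail b d hxb hbd ih =>
      refine ereach_trans ih (ereach_mono ?_ (hTr b d hbd.1))
      intro f hf
      obtain ⟨hfT, hfle⟩ := Finset.mem_filter.mp hf
      exact Finset.mem_filter.mpr ⟨hfT, lt_of_le_of_lt hfle hbd.2⟩
  have hF_to_step : ∀ (t : ℝ) (x y : {v : V // v ∈ R}),
      ereach (T.filter fun f => u f < t) x y →
      Relation.ReflTransGen (fun a b => a ≠ b ∧ u s(a, b) < t) x y := by
    intro t x y h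
    refine Relation.ReflTransGen.mono (r := estep (T.filter fun f => u f < t))
      (p := fun a b => a ≠ b ∧ u s(a, b) < t)
      (fun a b (hs : estep (T.filter fun f => u f < t) a b) => ⟨hs.1, ?_⟩) _ _ h
    exact (Finset.mem_filter.mp hs.2).2
  -- identify the merge plan's partitions
  have hrel : ∀ t : ℝ, 0 < t →
      M.rel t = ereachSetoid (T.filter fun f => u f < t) := by
    intro t ht
    apply Setoid.ext
    intro x y
    show (M.rel t).r x y ↔ ereach (T.filter fun f => u f < t) x y
    by_cases hxy : x = y
    · subst hxy
      exact iff_of_true ((M.rel t).refl' x) (ereach_refl x)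
    · have hiff := M.rel_iff t x y hxy
      rw [hM x y hxy] at hiff
      constructor
      · intro hr
        have hnot : ¬ (0 ≤ t ∧ t ≤ minimax (fun e => restrictDist G c R e / 2) x y) :=
          fun hcond => (hiff.mpr hcond) hr
        push_neg at hnot
        have hlt : minimax u x y < t := hnot ht.le
        exact hstep_to t x y ((minimax_lt_iff u x y t ht).mp hlt)
      · intro hr
        by_contra hnr
        have hcond := hiff.mp hnr
        have hlt : minimax u x y < t :=
          (minimax_lt_iff u x y t ht).mpr (hF_to_step t x y hr)
        have := hcond.2
        rw [hu] at hlt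
        linarith
  -- count of classes as a sum of indicators
  have hforest : ∀ t : ℝ,
      nclasses (T.filter fun f => u f < t) + (T.filter fun f => u f < t).card = n := by
    intro t
    have h1 := nclasses_add_card_mono (Finset.filter_subset (fun f => u f < t) T)
    have h2 := card_le_nclasses_add_card (α := {v : V // v ∈ R})
      (T.filter fun f => u f < t)
    rw [hcls1] at h1
    omega
  have hsum_card : ∀ (E : Finset (Sym2 {v : V // v ∈ R})) (t : ℝ), 0 < t →
      (∑ e ∈ E, (Set.Ioc (0:ℝ) (u e)).indicator (fun _ => (1:ℝ)) t)
        = ((E.filter fun f => ¬ u f < t).card : ℝ) := by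
    intro E t ht
    rw [Finset.card_filter]
    push_cast
    refine Finset.sum_congr rfl (fun e _ => ?_)
    by_cases hue : u e < t
    · rw [if_neg (by simpa using hue)]
      simp [Set.indicator_apply, Set.mem_Ioc, ht, not_le.mpr hue]
    · rw [if_pos (by simpa using hue)]
      simp [Set.indicator_apply, Set.mem_Ioc, ht, not_lt.mp hue]
  have hcount : ∀ t : ℝ, t ∈ Set.Ioi (0:ℝ) →
      ((Set.ncard (Quotient.mk (M.rel t) '' (Set.univ : Set {v : V // v ∈ R})) : ℝ) - 1)
        = ∑ e ∈ T, (Set.Ioc (0:ℝ) (u e)).indicator (fun _ => (1:ℝ)) t := by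
    intro t ht
    rw [Set.mem_Ioi] at ht
    rw [hrel t ht, Set.image_univ, Set.range_quotient_mk, Set.ncard_univ,
      hsum_card T t ht]
    have h1 := hforest t
    have h2 := Finset.card_filter_add_card_filter_not
      (s := T) (fun f => u f < t)
    have h3 : Nat.card (Quotient (ereachSetoid (T.filter fun f => u f < t)))
        = nclasses (T.filter fun f => u f < t) := rfl
    rw [h3]
    have : nclasses (T.filter fun f => u f < t)
        = (T.filter fun f => ¬ u f < t).card + 1 := by omega
    rw [this]
    push_cast
    ring
  -- the value equals the weight of the Kruskal tree
  have hvalue : M.value = ∑ e ∈ T, u e := by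
    show (∫ t in Set.Ioi (0:ℝ),
      ((Set.ncard (Quotient.mk (M.rel t) '' (Set.univ : Set {v : V // v ∈ R})) : ℝ) - 1)) = _
    rw [MeasureTheory.setIntegral_congr_fun measurableSet_Ioi hcount]
    exact integral_sum_indicator T u (fun e _ => hu0 e)
  -- minimality of the Kruskal tree
  have hmin : ∀ T' : Finset (Sym2 {v : V // v ∈ R}), (∀ e ∈ T', ¬ e.IsDiag) →
      (SimpleGraph.fromEdgeSet (↑T' : Set (Sym2 {v : V // v ∈ R}))).Connected →
      T'.card + 1 = n → (∑ e ∈ T, u e) ≤ ∑ e ∈ T', u e := by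
    intro T' hT'd hT'c hT'card
    have htot' : ∀ x y : {v : V // v ∈ R}, ereach T' x y := by
      intro x y
      have hreach := hT'c.preconnected x y
      rw [SimpleGraph.reachable_iff_reflTransGen] at hreach
      exact Relation.ReflTransGen.mono (p := estep T')
        (fun a b (hab : (SimpleGraph.fromEdgeSet (↑T' : Set (Sym2 {v : V // v ∈ R}))).Adj a b) => by
        rw [SimpleGraph.fromEdgeSet_adj] at hab
        exact ⟨hab.2, by exact_mod_cast hab.1⟩) _ _ hreach
    have hcls' : nclasses T' = 1 := nclasses_eq_one htot'
    have key : ∀ t ∈ Set.Ioi (0:ℝ),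
        (∑ e ∈ T, (Set.Ioc (0:ℝ) (u e)).indicator (fun _ => (1:ℝ)) t)
          ≤ ∑ e ∈ T', (Set.Ioc (0:ℝ) (u e)).indicator (fun _ => (1:ℝ)) t := by
      intro t ht
      rw [Set.mem_Ioi] at ht
      rw [hsum_card T t ht, hsum_card T' t ht]
      have h1 : nclasses (T.filter fun f => u f < t)
          ≤ nclasses (T'.filter fun f => u f < t) := by
        apply card_quotient_le_of_le
        intro a b hab
        refine ereach_of_forall_estep (fun a' b' hs => ?_) hab
        exact hstep_to t a' b'
          (Relation.ReflTransGen.single ⟨hs.1, (Finset.mem_filter.mp hs.2).2⟩)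
      have h2 := nclasses_add_card_mono (Finset.filter_subset (fun f => u f < t) T')
      rw [hcls'] at h2
      have h3 := Finset.card_filter_add_card_filter_not
        (s := T') (fun f => u f < t)
      have h4 := hforest t
      have h5 := Finset.card_filter_add_card_filter_not
        (s := T) (fun f => u f < t)
      have : (T.filter fun f => ¬ u f < t).card ≤ (T'.filter fun f => ¬ u f < t).card := by
        omega
      exact_mod_cast this
    calc (∑ e ∈ T, u e)
        = ∫ t in Set.Ioi (0:ℝ),
            (∑ e ∈ T, (Set.Ioc (0:ℝ) (u e)).indicator (fun _ => (1:ℝ)) t) :=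
          (integral_sum_indicator T u (fun e _ => hu0 e)).symm
      _ ≤ ∫ t in Set.Ioi (0:ℝ),
            (∑ e ∈ T', (Set.Ioc (0:ℝ) (u e)).indicator (fun _ => (1:ℝ)) t) := by
          refine MeasureTheory.setIntegral_mono_on ?_ ?_ measurableSet_Ioi key
          · exact MeasureTheory.integrable_finset_sum T
              (fun e _ => indicator_integrableOn (u e))
          · exact MeasureTheory.integrable_finset_sum T'
              (fun e _ => indicator_integrableOn (u e))
      _ = ∑ e ∈ T', u e := integral_sum_indicator T' u (fun e _ => hu0 e)
  -- identify the MST cost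
  have hrw : ∀ E : Finset (Sym2 {v : V // v ∈ R}),
      (∑ e ∈ E, restrictDist G c R e) = 2 * ∑ e ∈ E, u e := by
    intro E
    rw [Finset.mul_sum]
    refine Finset.sum_congr rfl (fun e _ => ?_)
    rw [hu]; ring
  have hmem : (∑ e ∈ T, restrictDist G c R e) ∈ {w : ℝ |
      ∃ T' : Finset (Sym2 {v : V // v ∈ R}), (∀ e ∈ T', ¬ e.IsDiag) ∧
      (SimpleGraph.fromEdgeSet (↑T' : Set (Sym2 {v : V // v ∈ R}))).Connected ∧
      T'.card + 1 = Nat.card {v : V // v ∈ R} ∧ w = ∑ e ∈ T', restrictDist G c R e} :=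
    ⟨T, hTd, hconn, hcardT, rfl⟩
  have hlb : ∀ w ∈ {w : ℝ |
      ∃ T' : Finset (Sym2 {v : V // v ∈ R}), (∀ e ∈ T', ¬ e.IsDiag) ∧
      (SimpleGraph.fromEdgeSet (↑T' : Set (Sym2 {v : V // v ∈ R}))).Connected ∧
      T'.card + 1 = Nat.card {v : V // v ∈ R} ∧ w = ∑ e ∈ T', restrictDist G c R e},
      (∑ e ∈ T, restrictDist G c R e) ≤ w := by
    rintro w ⟨T', hd', hc', hcard', rfl⟩
    rw [hrw T, hrw T']
    have := hmin T' hd' hc' hcard'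
    linarith
  have hmst : mstCost (restrictDist G c R) = ∑ e ∈ T, restrictDist G c R e := by
    apply le_antisymm
    · exact csInf_le ⟨_, hlb⟩ hmem
    · exact le_csInf ⟨_, hmem⟩ hlb
  rw [hvalue, hmst, hrw T]
  ring
end

section
/- Let R be finite, u an upper bound function, and M_u the merge plan with merge_{M_u}(x,y) = min over x-y paths of max of u over edges. Then the minimum spanning tree cost of the complete graph on R with respect to the edge costs {x,y} ↦ merge_{M_u}(x,y) equals the minimum spanning tree cost with respect to u, and both equal value(M_u). -/
attribute [local instance] Classical.propDecidable

namespace MSTProof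

variable {R : Type*}

/-- recursively computed path max -/
noncomputable def pm (u : Sym2 R → ℝ) : R → List R → ℝ
  | _, [] => 0
  | x, a :: l => max (u s(x, a)) (pm u a l)

def lastv : R → List R → R
  | x, [] => x
  | _, a :: l => lastv a l

lemma pm_eq (u : Sym2 R → ℝ) : ∀ (x : R) (l : List R),
    pm u x l = (((x :: l).zip l).map fun p => u s(p.1, p.2)).foldr max 0
  | _, [] => rfl
  | x, a :: l => by
    rw [List.zip_cons_cons, List.map_cons, List.foldr_cons, ← pm_eq u a l]; rfl

lemma lastv_eq : ∀ (x : R) (l : List R), lastv x l = (x :: l).getLast (List.cons_ne_nil x l)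
  | _, [] => rfl
  | x, a :: l => by rw [List.getLast_cons (List.cons_ne_nil a l)]; exact lastv_eq a l

lemma chain'_iff_chain (x : R) (l : List R) :
    List.Chain' (fun a b => a ≠ b) (x :: l) ↔ List.Chain (fun a b : R => a ≠ b) x l :=
  Iff.rfl

lemma pm_nonneg (u : Sym2 R → ℝ) (hu : ∀ e, 0 ≤ u e) : ∀ (x : R) (l : List R), 0 ≤ pm u x l
  | _, [] => le_refl 0
  | x, a :: l => le_max_of_le_right (pm_nonneg u hu a l)

lemma minimax_eq (u : Sym2 R → ℝ) (x y : R) :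
    minimax u x y = sInf {m : ℝ | ∃ l : List R,
      List.Chain (fun a b : R => a ≠ b) x l ∧ lastv x l = y ∧ m = pm u x l} := by
  unfold minimax
  congr 1
  ext w
  constructor
  · rintro ⟨l, h1, h2, h3⟩
    exact ⟨l, h1, by rw [lastv_eq]; exact h2, by rw [pm_eq]; exact h3⟩
  · rintro ⟨l, h1, h2, h3⟩
    exact ⟨l, h1, by rw [← lastv_eq]; exact h2, by rw [← pm_eq]; exact h3⟩

lemma minimax_set_nonempty (u : Sym2 R → ℝ) (x y : R) :
    {m : ℝ | ∃ l : List R,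
      List.Chain (fun a b : R => a ≠ b) x l ∧ lastv x l = y ∧ m = pm u x l}.Nonempty := by
  by_cases h : x = y
  · exact ⟨pm u x [], [], List.Chain.nil, h, rfl⟩
  · exact ⟨pm u x [y], [y], List.Chain.cons h List.Chain.nil, rfl, rfl⟩

lemma minimax_set_finite [Fintype R] (u : Sym2 R → ℝ) (x y : R) :
    {m : ℝ | ∃ l : List R,
      List.Chain (fun a b : R => a ≠ b) x l ∧ lastv x l = y ∧ m = pm u x l}.Finite := by
  apply Set.Finite.subset (Set.finite_range (fun e : Option (Sym2 R) => e.elim 0 u))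
  rintro w ⟨l, -, -, rfl⟩
  clear y
  induction l generalizing x with
  | nil => exact ⟨none, rfl⟩
  | cons a l ih =>
    rcases ih a with ⟨e, he⟩
    rcases max_choice (u s(x, a)) (pm u a l) with h | h
    · exact ⟨some s(x, a), by simp [pm, h]⟩
    · exact ⟨e, by rw [he, pm, h]⟩

lemma minimax_mem [Fintype R] (u : Sym2 R → ℝ) (x y : R) :
    ∃ l : List R, List.Chain (fun a b : R => a ≠ b) x l ∧ lastv x l = y ∧
      minimax u x y = pm u x l := by
  rw [minimax_eq]
  exact (minimax_set_nonempty u x y).csInf_mem (minimax_set_finite u x y)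

lemma minimax_bddBelow (u : Sym2 R → ℝ) (hu : ∀ e, 0 ≤ u e) (x y : R) :
    BddBelow {m : ℝ | ∃ l : List R,
      List.Chain (fun a b : R => a ≠ b) x l ∧ lastv x l = y ∧ m = pm u x l} := by
  refine ⟨0, ?_⟩
  rintro w ⟨l, _, _, rfl⟩
  exact pm_nonneg u hu x l

lemma minimax_le (u : Sym2 R → ℝ) (hu : ∀ e, 0 ≤ u e) {x y : R}
    {l : List R} (hc : List.Chain (fun a b : R => a ≠ b) x l) (hl : lastv x l = y) :
    minimax u x y ≤ pm u x l := by
  rw [minimax_eq]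
  exact csInf_le (minimax_bddBelow u hu x y) ⟨l, hc, hl, rfl⟩

lemma minimax_le_u (u : Sym2 R → ℝ) (hu : ∀ e, 0 ≤ u e) {x y : R} (h : x ≠ y) :
    minimax u x y ≤ u s(x, y) := by
  have := minimax_le u hu (l := [y]) (List.Chain.cons h List.Chain.nil) rfl
  simpa [pm, lastv, hu s(x,y), max_eq_left] using this

lemma minimax_nonneg (u : Sym2 R → ℝ) (hu : ∀ e, 0 ≤ u e) (x y : R) :
    0 ≤ minimax u x y := by
  rw [minimax_eq]
  apply le_csInf (minimax_set_nonempty u x y)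
  rintro w ⟨l, _, _, rfl⟩
  exact pm_nonneg u hu x l

end MSTProof
-- PART B : step relation and minimax characterization
namespace MSTProof
variable {R : Type*}

lemma lastv_append (x : R) (l l' : List R) : lastv x (l ++ l') = lastv (lastv x l) l' := by
  induction l generalizing x with
  | nil => rfl
  | cons a l ih => exact ih a

lemma chain_append_singleton {x y : R} {l : List R}
    (hc : List.Chain (fun a b : R => a ≠ b) x l) (h : lastv x l ≠ y) :
    List.Chain (fun a b : R => a ≠ b) x (l ++ [y]) := by
  induction l generalizing x with
  | nil => exact List.Chain.cons h List.Chain.nil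
  | cons a l ih =>
    rcases List.chain_cons.mp hc with ⟨h1, h2⟩
    exact List.Chain.cons h1 (ih h2 h)

lemma pm_append_singleton (u : Sym2 R → ℝ) (hu : ∀ e, 0 ≤ u e) (x y : R) (l : List R) :
    pm u x (l ++ [y]) = max (pm u x l) (u s(lastv x l, y)) := by
  induction l generalizing x with
  | nil => simp [pm, lastv, hu s(x,y), max_comm]
  | cons a l ih =>
    show max (u s(x,a)) (pm u a (l ++ [y])) = _
    rw [ih a, ← max_assoc]
    rfl

/-- threshold step relation -/
def step (u : Sym2 R → ℝ) (t : ℝ) (a b : R) : Prop := a ≠ b ∧ u s(a, b) < t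

lemma step_symm (u : Sym2 R → ℝ) (t : ℝ) : Symmetric (step u t) := by
  rintro a b ⟨h1, h2⟩
  exact ⟨h1.symm, by rwa [Sym2.eq_swap]⟩

lemma rtg_step_of_chain (u : Sym2 R → ℝ) {t : ℝ} :
    ∀ (x : R) (l : List R), List.Chain (fun a b : R => a ≠ b) x l → pm u x l < t →
      Relation.ReflTransGen (step u t) x (lastv x l)
  | _, [], _, _ => Relation.ReflTransGen.refl
  | x, a :: l, hc, hp => by
    rcases List.chain_cons.mp hc with ⟨h1, h2⟩
    have h3 : u s(x, a) < t := lt_of_le_of_lt (le_max_left _ _) hp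
    have h4 : pm u a l < t := lt_of_le_of_lt (le_max_right _ _) hp
    exact Relation.ReflTransGen.head ⟨h1, h3⟩ (rtg_step_of_chain u a l h2 h4)

lemma minimax_lt_of_rtg [Fintype R] (u : Sym2 R → ℝ) (hu : ∀ e, 0 ≤ u e) {t : ℝ} {x y : R}
    (h : Relation.ReflTransGen (step u t) x y) : x = y ∨ minimax u x y < t := by
  induction h with
  | refl => exact Or.inl rfl
  | @tail z w hxz hstep ih =>
    rcases hstep with ⟨hzw, huzw⟩
    rcases ih with rfl | hlt
    · right
      exact lt_of_le_of_lt (minimax_le_u u hu hzw) huzw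
    · right
      obtain ⟨l, hc, hl, hpm⟩ := minimax_mem u x z
      have hly : lastv x (l ++ [w]) = w := by rw [lastv_append]; simp [hl, lastv]
      have hcy : List.Chain (fun a b : R => a ≠ b) x (l ++ [w]) :=
        chain_append_singleton hc (by rw [hl]; exact hzw)
      have := minimax_le u hu hcy hly
      rw [pm_append_singleton u hu, hl, ← hpm] at this
      exact lt_of_le_of_lt this (max_lt hlt huzw)

lemma minimax_lt_iff_rtg [Fintype R] (u : Sym2 R → ℝ) (hu : ∀ e, 0 ≤ u e) {t : ℝ} {x y : R}
    (hxy : x ≠ y) : minimax u x y < t ↔ Relation.ReflTransGen (step u t) x y := by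
  constructor
  · intro h
    obtain ⟨l, hc, hl, hpm⟩ := minimax_mem u x y
    rw [← hl]
    exact rtg_step_of_chain u x l hc (hpm ▸ h)
  · intro h
    rcases minimax_lt_of_rtg u hu h with rfl | h
    · exact absurd rfl hxy
    · exact h

/-- the setoid of threshold-connectivity -/
def stepSetoid (u : Sym2 R → ℝ) (t : ℝ) : Setoid R :=
  ⟨Relation.ReflTransGen (step u t),
    ⟨fun _ => Relation.ReflTransGen.refl, fun h => (@Relation.ReflTransGen.symmetric _ _ ⟨fun _ _ h' => step_symm u t h'⟩).symm _ _ h,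
     fun h h' => Relation.ReflTransGen.trans h h'⟩⟩

end MSTProof
-- PART C : quotient counting
namespace MSTProof
variable {R : Type*}

/-- merge the classes of `a` and `b` in `s` -/
def mergeSetoid (s : Setoid R) (a b : R) : Setoid R :=
  ⟨fun x y => s.r x y ∨ (s.r x a ∧ s.r b y) ∨ (s.r x b ∧ s.r a y), by
    constructor
    · intro x; exact Or.inl (s.refl x)
    · rintro x y (h | ⟨h1, h2⟩ | ⟨h1, h2⟩)
      · exact Or.inl (s.symm h)
      · exact Or.inr (Or.inr ⟨s.symm h2, s.symm h1⟩)
      · exact Or.inr (Or.inl ⟨s.symm h2, s.symm h1⟩)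
    · rintro x y z (h | ⟨h1, h2⟩ | ⟨h1, h2⟩) (h' | ⟨h1', h2'⟩ | ⟨h1', h2'⟩)
      · exact Or.inl (s.trans h h')
      · exact Or.inr (Or.inl ⟨s.trans h h1', h2'⟩)
      · exact Or.inr (Or.inr ⟨s.trans h h1', h2'⟩)
      · exact Or.inr (Or.inl ⟨h1, s.trans h2 h'⟩)
      · exact Or.inr (Or.inl ⟨h1, h2'⟩)
      · exact Or.inl (s.trans h1 h2')
      · exact Or.inr (Or.inr ⟨h1, s.trans h2 h'⟩)
      · exact Or.inl (s.trans h1 h2')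
      · exact Or.inr (Or.inr ⟨h1, h2'⟩)⟩

lemma mergeSetoid_r {s : Setoid R} {a b x y : R} :
    (mergeSetoid s a b).r x y ↔
      s.r x y ∨ (s.r x a ∧ s.r b y) ∨ (s.r x b ∧ s.r a y) := Iff.rfl

lemma mergeSetoid_rel_ab (s : Setoid R) (a b : R) : (mergeSetoid s a b).r a b :=
  Or.inr (Or.inl ⟨s.refl a, s.refl b⟩)

lemma card_quotient_mergeSetoid [Finite R] (s : Setoid R) {a b : R} (hab : ¬ s.r a b) :
    Nat.card (Quotient s) = Nat.card (Quotient (mergeSetoid s a b)) + 1 := by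
  classical
  set s' := mergeSetoid s a b with hs'
  let q : Quotient s → Quotient s' := Quotient.map id (fun x y h => Or.inl h)
  have key : Function.Bijective
      (fun z : {x : Quotient s // x ≠ Quotient.mk s b} => q z.1) := by
    constructor
    · rintro ⟨z1, hz1⟩ ⟨z2, hz2⟩ h
      induction z1 using Quotient.ind with | _ p =>
      induction z2 using Quotient.ind with | _ r =>
      have : (s').r p r := Quotient.eq''.mp h
      rcases this with h' | ⟨h1, h2⟩ | ⟨h1, h2⟩
      · exact Subtype.ext (Quotient.sound h')
      · exact absurd (Quotient.sound (s.symm h2)) hz2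
      · exact absurd (Quotient.sound h1) hz1
    · intro z
      induction z using Quotient.ind with | _ w =>
      by_cases hw : s.r w b
      · refine ⟨⟨Quotient.mk s a, fun h => hab (Quotient.eq''.mp h)⟩, ?_⟩
        show Quotient.mk s' a = Quotient.mk s' w
        exact Quotient.sound (Or.inr (Or.inl ⟨s.refl a, s.symm hw⟩))
      · exact ⟨⟨Quotient.mk s w, fun h => hw (Quotient.eq''.mp h)⟩, rfl⟩
  have h1 : Nat.card (Quotient s') = Nat.card {x : Quotient s // x ≠ Quotient.mk s b} :=
    (Nat.card_eq_of_bijective _ key).symm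
  letI : Fintype (Quotient s) := Fintype.ofFinite _
  have h2 : Nat.card {x : Quotient s // x ≠ Quotient.mk s b}
      = Nat.card (Quotient s) - 1 := by
    rw [Nat.card_eq_fintype_card, Nat.card_eq_fintype_card]
    have := Fintype.card_subtype_compl (fun x : Quotient s => x = Quotient.mk s b)
    simpa [Fintype.card_subtype_eq] using this
  have h3 : 1 ≤ Nat.card (Quotient s) := by
    rw [Nat.card_eq_fintype_card]
    exact Fintype.card_pos_iff.mpr ⟨Quotient.mk s b⟩
  omega

end MSTProof
-- PART D : graph connectivity setoid and crossing bound
namespace MSTProof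
variable {R : Type*}

/-- connectivity setoid of the graph with edge set `E` -/
def connSetoid (E : Finset (Sym2 R)) : Setoid R :=
  ⟨Relation.ReflTransGen (SimpleGraph.fromEdgeSet (↑E : Set (Sym2 R))).Adj,
    ⟨fun _ => Relation.ReflTransGen.refl,
     fun h => (@Relation.ReflTransGen.symmetric _ _
       ⟨fun _ _ h' => h'.symm⟩).symm _ _ h,
     fun h h' => Relation.ReflTransGen.trans h h'⟩⟩

lemma connSetoid_r {E : Finset (Sym2 R)} {x y : R} :
    (connSetoid E).r x y ↔
      Relation.ReflTransGen (SimpleGraph.fromEdgeSet (↑E : Set (Sym2 R))).Adj x y := Iff.rfl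

lemma connSetoid_mono {E F : Finset (Sym2 R)} (h : E ⊆ F) {x y : R}
    (hr : (connSetoid E).r x y) : (connSetoid F).r x y := by
  refine Relation.ReflTransGen.mono ?_ _ _ hr
  intro a b hab
  rw [SimpleGraph.fromEdgeSet_adj] at hab ⊢
  exact ⟨Finset.coe_subset.mpr h hab.1, hab.2⟩

/-- whether an edge crosses classes of a setoid -/
def crossing (s : Setoid R) (e : Sym2 R) : Prop :=
  ¬ Sym2.lift ⟨fun a b => s.r a b, fun a b => propext ⟨fun h => s.symm h, fun h => s.symm h⟩⟩ e

lemma crossing_mk {s : Setoid R} {a b : R} : crossing s s(a, b) ↔ ¬ s.r a b := Iff.rfl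

lemma crossing_anti {s s' : Setoid R} (h : ∀ x y, s.r x y → s'.r x y) {e : Sym2 R}
    (hc : crossing s' e) : crossing s e := by
  induction e using Sym2.inductionOn with | _ a b =>
  rw [crossing_mk] at hc ⊢
  exact fun h' => hc (h a b h')

/-- adding an edge between `a` and `b` to a graph merges connectivity classes -/
lemma connSetoid_insert {E : Finset (Sym2 R)} {a b : R} (hab : a ≠ b) (x y : R) :
    (connSetoid (insert s(a, b) E)).r x y ↔ (mergeSetoid (connSetoid E) a b).r x y := by
  constructor
  · intro h
    induction h with
    | refl => exact Or.inl Relation.ReflTransGen.refl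
    | @tail z w hxz hstep ih =>
      rw [SimpleGraph.fromEdgeSet_adj] at hstep
      rcases hstep with ⟨hmem, hzw⟩
      rw [Finset.coe_insert, Set.mem_insert_iff] at hmem
      rcases hmem with heq | hmem
      · have hz : (mergeSetoid (connSetoid E) a b).r z w := by
          rcases Sym2.eq_iff.mp heq with ⟨ha', hb'⟩ | ⟨ha', hb'⟩
          · rw [ha', hb']; exact mergeSetoid_rel_ab _ a b
          · rw [ha', hb']
            exact (mergeSetoid (connSetoid E) a b).symm (mergeSetoid_rel_ab _ a b)
        exact (mergeSetoid (connSetoid E) a b).trans ih hz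
      · refine (mergeSetoid (connSetoid E) a b).trans ih (Or.inl ?_)
        exact Relation.ReflTransGen.single ((SimpleGraph.fromEdgeSet_adj _).mpr ⟨hmem, hzw⟩)
  · have hstep : (SimpleGraph.fromEdgeSet (↑(insert s(a, b) E) : Set (Sym2 R))).Adj a b := by
      rw [SimpleGraph.fromEdgeSet_adj]
      exact ⟨by simp, hab⟩
    have hmono : ∀ p q : R, (connSetoid E).r p q → (connSetoid (insert s(a, b) E)).r p q :=
      fun p q h => connSetoid_mono (Finset.subset_insert _ _) h
    rintro (h | ⟨h1, h2⟩ | ⟨h1, h2⟩)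
    · exact hmono _ _ h
    · exact Relation.ReflTransGen.trans (hmono _ _ h1)
        (Relation.ReflTransGen.trans (Relation.ReflTransGen.single hstep) (hmono _ _ h2))
    · exact Relation.ReflTransGen.trans (hmono _ _ h1)
        (Relation.ReflTransGen.trans (Relation.ReflTransGen.single hstep.symm) (hmono _ _ h2))

lemma card_quotient_eq_of_setoid_eq {s s' : Setoid R} (h : ∀ x y, s.r x y ↔ s'.r x y) :
    Nat.card (Quotient s) = Nat.card (Quotient s') := by
  have : s = s' := Setoid.ext h
  rw [this]

/-- the crossing bound: a preconnected graph needs at least `c - 1` crossing edges -/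
lemma card_quotient_le_crossing [Finite R] [Nonempty R] (E : Finset (Sym2 R))
    (hconn : (SimpleGraph.fromEdgeSet (↑E : Set (Sym2 R))).Preconnected) (s : Setoid R) :
    Nat.card (Quotient s) ≤ (E.filter (fun e => crossing s e)).card + 1 := by
  classical
  generalize hk : (E.filter (fun e => crossing s e)).card = k
  induction k using Nat.strong_induction_on generalizing s with
  | _ k ih =>
  rcases Nat.eq_zero_or_pos k with rfl | hpos
  · -- no crossing edges: everything in one class
    rw [Finset.card_eq_zero] at hk
    have hall : ∀ x y : R, s.r x y := by
      intro x y
      have hreach := (SimpleGraph.reachable_iff_reflTransGen x y).mp (hconn x y)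
      induction hreach with
      | refl => exact s.refl x
      | @tail z w hxz hstep ihh =>
        rw [SimpleGraph.fromEdgeSet_adj] at hstep
        refine s.trans ihh ?_
        by_contra hzw
        have : s(z, w) ∈ E.filter (fun e => crossing s e) :=
          Finset.mem_filter.mpr ⟨hstep.1, crossing_mk.mpr hzw⟩
        rw [hk] at this
        exact absurd this (Finset.notMem_empty _)
    have : Subsingleton (Quotient s) := by
      constructor
      intro z1 z2
      induction z1 using Quotient.ind with | _ p =>
      induction z2 using Quotient.ind with | _ q =>
      exact Quotient.sound (hall p q)
    have : Nat.card (Quotient s) = 1 :=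
      Nat.card_eq_one_iff_unique.mpr ⟨this, ⟨Quotient.mk s (Classical.arbitrary R)⟩⟩
    omega
  · -- pick a crossing edge and merge
    have hne : (E.filter (fun e => crossing s e)).Nonempty := by
      rw [← Finset.card_pos, hk]; exact hpos
    obtain ⟨e, he⟩ := hne
    rcases Finset.mem_filter.mp he with ⟨heE, hec⟩
    induction e using Sym2.inductionOn with | _ a b =>
    have hab : ¬ s.r a b := crossing_mk.mp hec
    set s' := mergeSetoid s a b with hs'
    have hsub : E.filter (fun e => crossing s' e) ⊆
        (E.filter (fun e => crossing s e)).erase s(a, b) := by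
      intro f hf
      rcases Finset.mem_filter.mp hf with ⟨hfE, hfc⟩
      refine Finset.mem_erase.mpr ⟨?_, Finset.mem_filter.mpr ⟨hfE, crossing_anti (fun x y h => Or.inl h) hfc⟩⟩
      rintro rfl
      exact (crossing_mk.mp hfc) (mergeSetoid_rel_ab s a b)
    have hlt : (E.filter (fun e => crossing s' e)).card < k := by
      calc (E.filter (fun e => crossing s' e)).card
          ≤ ((E.filter (fun e => crossing s e)).erase s(a, b)).card := Finset.card_le_card hsub
        _ < (E.filter (fun e => crossing s e)).card :=
            Finset.card_erase_lt_of_mem he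
        _ = k := hk
    have h1 := ih _ hlt s' rfl
    have h2 : Nat.card (Quotient s) = Nat.card (Quotient s') + 1 :=
      card_quotient_mergeSetoid s hab
    omega

end MSTProof
-- PART E : Kruskal
namespace MSTProof
variable {R : Type*}

/-- step relation restricted to edges of `T` -/
def stepT (u : Sym2 R → ℝ) (T : Finset (Sym2 R)) (t : ℝ) (a b : R) : Prop :=
  s(a, b) ∈ T ∧ a ≠ b ∧ u s(a, b) < t

lemma connSetoid_empty (x y : R) : (connSetoid (∅ : Finset (Sym2 R))).r x y ↔ x = y := by
  rw [connSetoid_r]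
  constructor
  · intro h
    induction h with
    | refl => rfl
    | @tail z w hxz hstep ih =>
      exfalso
      rw [SimpleGraph.fromEdgeSet_adj] at hstep
      simpa using hstep.1
  · rintro rfl; exact Relation.ReflTransGen.refl

lemma card_quotient_connSetoid_empty [Fintype R] :
    Nat.card (Quotient (connSetoid (∅ : Finset (Sym2 R)))) = Fintype.card R := by
  rw [← Nat.card_eq_fintype_card]
  refine (Nat.card_eq_of_bijective (Quotient.mk (connSetoid ∅)) ⟨?_, fun q => Quotient.exists_rep q⟩).symm
  intro x y h
  exact (connSetoid_empty x y).mp (Quotient.eq''.mp h)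

lemma kruskal_aux [Fintype R] [Nonempty R] (u : Sym2 R → ℝ) (k : ℕ) :
    ∀ F : Finset (Sym2 R),
      (∀ e ∈ F, ¬ e.IsDiag) →
      (∀ S ⊆ F, Nat.card (Quotient (connSetoid S)) + S.card = Fintype.card R) →
      (∀ f ∈ F, ∀ p q : R, p ≠ q → ¬ (connSetoid F).r p q → u f ≤ u s(p, q)) →
      (∀ (t : ℝ) (x y : R), (connSetoid F).r x y →
        Relation.ReflTransGen (step u t) x y →
        Relation.ReflTransGen (stepT u F t) x y) →
      Nat.card (Quotient (connSetoid F)) = k →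
      ∃ T : Finset (Sym2 R), F ⊆ T ∧ (∀ e ∈ T, ¬ e.IsDiag) ∧
        (∀ S ⊆ T, Nat.card (Quotient (connSetoid S)) + S.card = Fintype.card R) ∧
        (SimpleGraph.fromEdgeSet (↑T : Set (Sym2 R))).Connected ∧
        (∀ (t : ℝ) (x y : R), Relation.ReflTransGen (step u t) x y →
          Relation.ReflTransGen (stepT u T t) x y) := by
  classical
  induction k using Nat.strong_induction_on with
  | _ k ih =>
  intro F hdiag hcount hmin hC hk
  by_cases hone : Nat.card (Quotient (connSetoid F)) = 1
  · -- F is already spanning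
    have hsub : Subsingleton (Quotient (connSetoid F)) :=
      (Nat.card_eq_one_iff_unique.mp hone).1
    have hall : ∀ x y : R, (connSetoid F).r x y := fun x y =>
      Quotient.eq''.mp (Subsingleton.elim _ _)
    refine ⟨F, Finset.Subset.refl F, hdiag, hcount, ?_, ?_⟩
    · exact ⟨fun x y => (SimpleGraph.reachable_iff_reflTransGen x y).mpr (hall x y)⟩
    · exact fun t x y h => hC t x y (hall x y) h
  · -- there are at least two components
    have hpos : 1 ≤ Nat.card (Quotient (connSetoid F)) := by
      have hne : Nonempty (Quotient (connSetoid F)) :=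
        ⟨Quotient.mk (connSetoid F) (Classical.arbitrary R)⟩
      have hfin : Finite (Quotient (connSetoid F)) := Quotient.finite _
      exact Nat.one_le_iff_ne_zero.mpr (Nat.card_ne_zero.mpr ⟨hne, hfin⟩)
    have htwo : 1 < Nat.card (Quotient (connSetoid F)) := by omega
    have hnontriv : Nontrivial (Quotient (connSetoid F)) := by
      letI : Fintype (Quotient (connSetoid F)) := Fintype.ofFinite _
      rw [Nat.card_eq_fintype_card] at htwo
      exact Fintype.one_lt_card_iff_nontrivial.mp htwo
    obtain ⟨z1, z2, hz12⟩ := hnontriv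
    obtain ⟨p, hp⟩ := Quotient.exists_rep z1
    obtain ⟨q, hq⟩ := Quotient.exists_rep z2
    have hpq : ¬ (connSetoid F).r p q := by
      intro h
      exact hz12 (by rw [← hp, ← hq]; exact Quotient.sound h)
    set X := Finset.univ.filter
      (fun e : Sym2 R => ¬ e.IsDiag ∧ crossing (connSetoid F) e) with hX
    have hXne : X.Nonempty := by
      refine ⟨s(p, q), Finset.mem_filter.mpr ⟨Finset.mem_univ _, ?_, ?_⟩⟩
      · rw [Sym2.mk_isDiag_iff]
        exact fun h => hpq (h ▸ (connSetoid F).refl p)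
      · exact crossing_mk.mpr hpq
    obtain ⟨e, heX, hemin⟩ := X.exists_min_image u hXne
    induction e using Sym2.inductionOn with | _ a b =>
    rcases Finset.mem_filter.mp heX with ⟨-, hadiag, hacr⟩
    have hab : a ≠ b := by rwa [Sym2.mk_isDiag_iff] at hadiag
    have habr : ¬ (connSetoid F).r a b := crossing_mk.mp hacr
    set F' := insert s(a, b) F with hF'
    have hFsub : F ⊆ F' := Finset.subset_insert _ _
    have hmono : ∀ x y : R, (connSetoid F).r x y → (connSetoid F').r x y :=
      fun x y h => connSetoid_mono hFsub h
    -- counting for subsets of F'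
    have hcount' : ∀ S ⊆ F', Nat.card (Quotient (connSetoid S)) + S.card = Fintype.card R := by
      intro S hS
      by_cases heS : s(a, b) ∈ S
      · set S0 := S.erase s(a, b) with hS0
        have hS0F : S0 ⊆ F := by
          intro f hf
          rcases Finset.mem_erase.mp hf with ⟨hfe, hfS⟩
          rcases Finset.mem_insert.mp (hS hfS) with h | h
          · exact absurd h hfe
          · exact h
        have hSi : S = insert s(a, b) S0 := (Finset.insert_erase heS).symm
        have habS0 : ¬ (connSetoid S0).r a b := fun h => habr (connSetoid_mono hS0F h)
        have h1 : Nat.card (Quotient (connSetoid S)) =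
            Nat.card (Quotient (mergeSetoid (connSetoid S0) a b)) := by
          rw [hSi]
          exact card_quotient_eq_of_setoid_eq (connSetoid_insert hab)
        have h2 : Nat.card (Quotient (connSetoid S0)) =
            Nat.card (Quotient (mergeSetoid (connSetoid S0) a b)) + 1 :=
          card_quotient_mergeSetoid _ habS0
        have h3 := hcount S0 hS0F
        have h4 : S.card = S0.card + 1 := by
          rw [hSi, Finset.card_insert_of_notMem (Finset.notMem_erase _ _)]
        omega
      · refine hcount S (fun f hf => ?_)
        rcases Finset.mem_insert.mp (hS hf) with h | h
        · exact absurd (h ▸ hf) heS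
        · exact h
    -- minimality for F'
    have hmin' : ∀ f ∈ F', ∀ p' q' : R, p' ≠ q' → ¬ (connSetoid F').r p' q' →
        u f ≤ u s(p', q') := by
      intro f hf p' q' hpq' hcr'
      have hcrF : ¬ (connSetoid F).r p' q' := fun h => hcr' (hmono _ _ h)
      rcases Finset.mem_insert.mp hf with rfl | hfF
      · refine hemin s(p', q') (Finset.mem_filter.mpr ⟨Finset.mem_univ _, ?_, crossing_mk.mpr hcrF⟩)
        rw [Sym2.mk_isDiag_iff]; exact hpq'
      · exact hmin f hfF p' q' hpq' hcrF
    -- connectivity simulation for F'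
    have hC' : ∀ (t : ℝ) (x y : R), (connSetoid F').r x y →
        Relation.ReflTransGen (step u t) x y →
        Relation.ReflTransGen (stepT u F' t) x y := by
      intro t x y hrel hrtg
      have H : ∀ x' y' : R, Relation.ReflTransGen (step u t) x' y' →
          (∃ p' q' : R, p' ≠ q' ∧ u s(p', q') < t ∧ ¬ (connSetoid F).r p' q') ∨
          ((connSetoid F).r x' y' ∧ Relation.ReflTransGen (stepT u F t) x' y') := by
        intro x' y' h
        induction h with
        | refl => exact Or.inr ⟨(connSetoid F).refl _, Relation.ReflTransGen.refl⟩
        | @tail z w hxz hstep ihh =>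
          rcases ihh with h | ⟨hrel', hrtg'⟩
          · exact Or.inl h
          · by_cases hzw : (connSetoid F).r z w
            · refine Or.inr ⟨(connSetoid F).trans hrel' hzw, Relation.ReflTransGen.trans hrtg' ?_⟩
              exact hC t z w hzw (Relation.ReflTransGen.single hstep)
            · exact Or.inl ⟨z, w, hstep.1, hstep.2, hzw⟩
      rcases H x y hrtg with ⟨p', q', hpq', hupq', hcr'⟩ | ⟨-, hrtg'⟩
      · -- all edges of F' are cheap
        have hsmall : ∀ f ∈ F', u f < t := by
          intro f hf
          rcases Finset.mem_insert.mp hf with rfl | hfF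
          · refine lt_of_le_of_lt (hemin s(p', q') (Finset.mem_filter.mpr
              ⟨Finset.mem_univ _, ?_, crossing_mk.mpr hcr'⟩)) hupq'
            rw [Sym2.mk_isDiag_iff]; exact hpq'
          · exact lt_of_le_of_lt (hmin f hfF p' q' hpq' hcr') hupq'
        refine Relation.ReflTransGen.mono ?_ _ _ hrel
        intro z w hzw
        rw [SimpleGraph.fromEdgeSet_adj] at hzw
        exact ⟨hzw.1, hzw.2, hsmall _ hzw.1⟩
      · refine Relation.ReflTransGen.mono ?_ _ _ hrtg'
        rintro z w ⟨h1, h2, h3⟩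
        exact ⟨hFsub h1, h2, h3⟩
    -- component count decreased
    have hkk : Nat.card (Quotient (connSetoid F')) = k - 1 := by
      have h1 : Nat.card (Quotient (connSetoid F')) =
          Nat.card (Quotient (mergeSetoid (connSetoid F) a b)) :=
        card_quotient_eq_of_setoid_eq (connSetoid_insert hab)
      have h2 : Nat.card (Quotient (connSetoid F)) =
          Nat.card (Quotient (mergeSetoid (connSetoid F) a b)) + 1 :=
        card_quotient_mergeSetoid _ habr
      omega
    have hdiag' : ∀ e ∈ F', ¬ e.IsDiag := by
      intro f hf
      rcases Finset.mem_insert.mp hf with rfl | hfF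
      · exact hadiag
      · exact hdiag f hfF
    have hklt : k - 1 < k := by omega
    obtain ⟨T, hT1, hT2, hT3, hT4, hT5⟩ :=
      ih (k - 1) hklt F' hdiag' hcount' hmin' hC' hkk
    exact ⟨T, Finset.Subset.trans hFsub hT1, hT2, hT3, hT4, hT5⟩

lemma kruskal [Fintype R] [Nonempty R] (u : Sym2 R → ℝ) :
    ∃ T : Finset (Sym2 R), (∀ e ∈ T, ¬ e.IsDiag) ∧
      (∀ S ⊆ T, Nat.card (Quotient (connSetoid S)) + S.card = Fintype.card R) ∧
      (SimpleGraph.fromEdgeSet (↑T : Set (Sym2 R))).Connected ∧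
      (∀ (t : ℝ) (x y : R), Relation.ReflTransGen (step u t) x y →
        Relation.ReflTransGen (stepT u T t) x y) := by
  have hcount0 : ∀ S ⊆ (∅ : Finset (Sym2 R)),
      Nat.card (Quotient (connSetoid S)) + S.card = Fintype.card R := by
    intro S hS
    rw [Finset.subset_empty.mp hS]
    rw [card_quotient_connSetoid_empty, Finset.card_empty, Nat.add_zero]

  have hC0 : ∀ (t : ℝ) (x y : R), (connSetoid (∅ : Finset (Sym2 R))).r x y →
      Relation.ReflTransGen (step u t) x y →
      Relation.ReflTransGen (stepT u (∅ : Finset (Sym2 R)) t) x y := by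
    intro t x y hrel _
    rw [connSetoid_empty] at hrel
    exact hrel ▸ Relation.ReflTransGen.refl
  obtain ⟨T, _, h2, h3, h4, h5⟩ := kruskal_aux u
    (Nat.card (Quotient (connSetoid (∅ : Finset (Sym2 R)))))
    ∅ (by simp) hcount0 (by simp) hC0 rfl
  exact ⟨T, h2, h3, h4, h5⟩

end MSTProof
-- PART F : integral of the counting function
namespace MSTProof
open MeasureTheory
variable {R : Type*}

noncomputable def cardFun (v : Sym2 R → ℝ) (T : Finset (Sym2 R)) (t : ℝ) : ℝ :=
  ((T.filter fun e => t ≤ v e).card : ℝ)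

lemma cardFun_eqOn (v : Sym2 R → ℝ) (T : Finset (Sym2 R)) :
    Set.EqOn (cardFun v T)
      (fun t => ∑ e ∈ T, Set.indicator (Set.Ioc 0 (v e)) (fun _ => (1 : ℝ)) t)
      (Set.Ioi 0) := by
  classical
  intro t ht
  have h : ∀ e ∈ T, Set.indicator (Set.Ioc 0 (v e)) (fun _ => (1 : ℝ)) t
      = if t ≤ v e then 1 else 0 := by
    intro e _
    simp only [Set.indicator_apply, Set.mem_Ioc]
    rw [Set.mem_Ioi] at ht
    simp [ht]
  show ((T.filter fun e => t ≤ v e).card : ℝ)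
      = ∑ e ∈ T, Set.indicator (Set.Ioc 0 (v e)) (fun _ => (1 : ℝ)) t
  rw [Finset.sum_congr rfl h, Finset.sum_boole]

lemma indicator_integrableOn (c : ℝ) :
    IntegrableOn (Set.indicator (Set.Ioc 0 c) (fun _ => (1 : ℝ))) (Set.Ioi 0) := by
  apply Integrable.integrableOn
  rw [integrable_indicator_iff measurableSet_Ioc]
  apply (integrableOn_const_iff (C := (1 : ℝ))).mpr
  right
  rw [Real.volume_Ioc]
  exact ENNReal.ofReal_lt_top

lemma cardFun_integrableOn (v : Sym2 R → ℝ) (T : Finset (Sym2 R)) :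
    IntegrableOn (cardFun v T) (Set.Ioi 0) := by
  refine IntegrableOn.congr_fun ?_ (cardFun_eqOn v T).symm measurableSet_Ioi
  exact integrable_finset_sum _ (fun e _ => indicator_integrableOn (v e))

lemma integral_indicator_Ioc {c : ℝ} (hc : 0 ≤ c) :
    ∫ t in Set.Ioi (0 : ℝ), Set.indicator (Set.Ioc 0 c) (fun _ => (1 : ℝ)) t = c := by
  rw [MeasureTheory.integral_indicator measurableSet_Ioc,
    MeasureTheory.Measure.restrict_restrict measurableSet_Ioc,
    Set.inter_eq_left.mpr Set.Ioc_subset_Ioi_self, MeasureTheory.setIntegral_const,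
    Real.volume_real_Ioc, sub_zero, max_eq_left hc, smul_eq_mul, mul_one]

lemma integral_cardFun (v : Sym2 R → ℝ) (T : Finset (Sym2 R)) (hv : ∀ e ∈ T, 0 ≤ v e) :
    ∫ t in Set.Ioi (0 : ℝ), cardFun v T t = ∑ e ∈ T, v e := by
  rw [MeasureTheory.setIntegral_congr_fun measurableSet_Ioi (cardFun_eqOn v T),
    MeasureTheory.integral_finset_sum _ (fun e _ => indicator_integrableOn (v e))]
  exact Finset.sum_congr rfl (fun e he => integral_indicator_Ioc (hv e he))

end MSTProof
-- PART G : main theorem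
namespace MSTProof
open MeasureTheory
variable {R : Type*}

lemma rel_iff_rtg [Fintype R] (u : Sym2 R → ℝ) (hu : ∀ e, 0 ≤ u e)
    (M : MergePlan R) (hM : ∀ x y : R, x ≠ y → M.mergeTime x y = minimax u x y)
    {t : ℝ} (ht : 0 < t) (x y : R) :
    (M.rel t).r x y ↔ Relation.ReflTransGen (step u t) x y := by
  by_cases hxy : x = y
  · subst hxy
    simp only [iff_true_intro Relation.ReflTransGen.refl, iff_true]
    exact (M.rel t).refl x
  · rw [← minimax_lt_iff_rtg u hu hxy, ← hM x y hxy]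
    have h := M.rel_iff t x y hxy
    constructor
    · intro hr
      by_contra hle
      rw [not_lt] at hle
      exact (h.mpr ⟨le_of_lt ht, hle⟩) hr
    · intro hlt
      by_contra hr
      exact absurd ((h.mp hr).2) (not_le.mpr hlt)

theorem main [Fintype R] [Nonempty R]
    (u : Sym2 R → ℝ) (hu : ∀ e, 0 ≤ u e)
    (M : MergePlan R)
    (hM : ∀ x y : R, x ≠ y → M.mergeTime x y = minimax u x y)
    (m : Sym2 R → ℝ)
    (hm : ∀ x y : R, x ≠ y → m s(x, y) = M.mergeTime x y) :
    mstCost m = mstCost u ∧ mstCost u = M.value := by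
  classical
  obtain ⟨T, hTdiag, hTcount, hTconn, hTsim⟩ := kruskal u
  -- T is a spanning tree
  have hTone : Nat.card (Quotient (connSetoid T)) = 1 := by
    refine Nat.card_eq_one_iff_unique.mpr ⟨⟨fun z1 z2 => ?_⟩,
      ⟨Quotient.mk _ (Classical.arbitrary R)⟩⟩
    induction z1 using Quotient.ind with | _ p =>
    induction z2 using Quotient.ind with | _ q =>
    exact Quotient.sound ((SimpleGraph.reachable_iff_reflTransGen p q).mp (hTconn.preconnected p q))
  have hTcard : T.card + 1 = Fintype.card R := by
    have := hTcount T (Finset.Subset.refl T)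
    omega
  -- the number of classes at time t
  have hclasses : ∀ t : ℝ, 0 < t →
      Nat.card (Quotient (M.rel t))
        + (T.filter fun e => u e < t).card = Fintype.card R := by
    intro t ht
    have hsetoid : ∀ x y : R, (connSetoid (T.filter fun e => u e < t)).r x y ↔ (M.rel t).r x y := by
      intro x y
      rw [rel_iff_rtg u hu M hM ht]
      constructor
      · intro h
        refine Relation.ReflTransGen.mono ?_ _ _ h
        intro a b hab
        rw [SimpleGraph.fromEdgeSet_adj] at hab
        rcases hab with ⟨hmem, hne⟩
        rw [Finset.mem_coe, Finset.mem_filter] at hmem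
        exact ⟨hne, hmem.2⟩
      · intro h
        refine Relation.ReflTransGen.mono ?_ _ _ (hTsim t x y h)
        rintro a b ⟨h1, h2, h3⟩
        rw [SimpleGraph.fromEdgeSet_adj]
        exact ⟨Finset.mem_coe.mpr (Finset.mem_filter.mpr ⟨h1, h3⟩), h2⟩
    have := hTcount (T.filter fun e => u e < t) (Finset.filter_subset _ _)
    rwa [card_quotient_eq_of_setoid_eq hsetoid] at this
  have hsplit : ∀ t : ℝ, (T.filter fun e => u e < t).card
      + (T.filter fun e => t ≤ u e).card = T.card := by
    intro t
    have := Finset.card_filter_add_card_filter_not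
      (s := T) (p := fun e => u e < t)
    simpa [not_lt] using this
  -- the integrand of value equals the counting function of T
  have hvalEq : Set.EqOn
      (fun t : ℝ => ((Set.ncard (Quotient.mk (M.rel t) '' (Set.univ : Set R)) : ℝ) - 1))
      (cardFun u T) (Set.Ioi 0) := by
    intro t ht
    rw [Set.mem_Ioi] at ht
    have h1 : Quotient.mk (M.rel t) '' (Set.univ : Set R) = Set.univ := by
      rw [Set.image_univ, Set.range_eq_univ]
      exact fun q => Quotient.exists_rep q
    have h2 := hclasses t ht
    have h3 := hsplit t
    show ((Set.ncard (Quotient.mk (M.rel t) '' (Set.univ : Set R)) : ℝ) - 1)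
      = ((T.filter fun e => t ≤ u e).card : ℝ)
    rw [h1, Set.ncard_univ]
    have h4 : (T.filter fun e => t ≤ u e).card + 1 = Nat.card (Quotient (M.rel t)) := by
      omega
    push_cast [← h4]
    ring
  -- value = sum of u over T
  have hvalue : M.value = ∑ e ∈ T, u e := by
    show (∫ t in Set.Ioi (0:ℝ),
      ((Set.ncard (Quotient.mk (M.rel t) '' (Set.univ : Set R)) : ℝ) - 1)) = _
    rw [MeasureTheory.setIntegral_congr_fun measurableSet_Ioi hvalEq]
    exact integral_cardFun u T (fun e _ => hu e)
  -- sets in the two mstCost infima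
  set setU := {w : ℝ | ∃ T' : Finset (Sym2 R), (∀ e ∈ T', ¬ e.IsDiag) ∧
    (SimpleGraph.fromEdgeSet (↑T' : Set (Sym2 R))).Connected ∧
    T'.card + 1 = Nat.card R ∧ w = ∑ e ∈ T', u e} with hsetU
  set setM := {w : ℝ | ∃ T' : Finset (Sym2 R), (∀ e ∈ T', ¬ e.IsDiag) ∧
    (SimpleGraph.fromEdgeSet (↑T' : Set (Sym2 R))).Connected ∧
    T'.card + 1 = Nat.card R ∧ w = ∑ e ∈ T', m e} with hsetM
  have hmstU : mstCost u = sInf setU := rfl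
  have hmstM : mstCost m = sInf setM := rfl
  have hTcard' : T.card + 1 = Nat.card R := by
    rw [Nat.card_eq_fintype_card]; exact hTcard
  have hmemU : (∑ e ∈ T, u e) ∈ setU := ⟨T, hTdiag, hTconn, hTcard', rfl⟩
  have hmemM : (∑ e ∈ T, m e) ∈ setM := ⟨T, hTdiag, hTconn, hTcard', rfl⟩
  -- nonneg of m on nondiagonal edges
  have hmnn : ∀ e : Sym2 R, ¬ e.IsDiag → 0 ≤ m e := by
    intro e he
    induction e using Sym2.inductionOn with | _ p q =>
    rw [Sym2.mk_isDiag_iff] at he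
    rw [hm p q he]
    exact M.mergeTime_nonneg p q he
  have hmleu : ∀ e : Sym2 R, ¬ e.IsDiag → m e ≤ u e := by
    intro e he
    induction e using Sym2.inductionOn with | _ p q =>
    rw [Sym2.mk_isDiag_iff] at he
    rw [hm p q he, hM p q he]
    exact minimax_le_u u hu he
  have hbddU : BddBelow setU := by
    refine ⟨0, ?_⟩
    rintro w ⟨T', hT'd, -, -, rfl⟩
    exact Finset.sum_nonneg (fun e _ => hu e)
  have hbddM : BddBelow setM := by
    refine ⟨0, ?_⟩
    rintro w ⟨T', hT'd, -, -, rfl⟩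
    exact Finset.sum_nonneg (fun e he => hmnn e (hT'd e he))
  -- (1) mstCost u ≤ value
  have h1 : mstCost u ≤ M.value := by
    rw [hmstU, hvalue]
    exact csInf_le hbddU hmemU
  -- (2) value ≤ mstCost m
  have h2 : M.value ≤ mstCost m := by
    rw [hmstM]
    refine le_csInf ⟨_, hmemM⟩ ?_
    rintro w ⟨T', hT'd, hT'c, hT'card, rfl⟩
    -- pointwise bound: cardFun u T ≤ cardFun m T' on Ioi 0
    have hpt : ∀ t ∈ Set.Ioi (0:ℝ), cardFun u T t ≤ cardFun m T' t := by
      intro t ht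
      rw [Set.mem_Ioi] at ht
      have hcross := card_quotient_le_crossing T' hT'c.preconnected (M.rel t)
      have hfil : T'.filter (fun e => crossing (M.rel t) e)
          = T'.filter (fun e => t ≤ m e) := by
        refine Finset.filter_congr ?_
        intro e he
        induction e using Sym2.inductionOn with | _ p q =>
        have hpq : p ≠ q := by
          have := hT'd _ he
          rwa [Sym2.mk_isDiag_iff] at this
        rw [crossing_mk, hm p q hpq]
        have h := M.rel_iff t p q hpq
        constructor
        · intro hr
          exact (h.mp hr).2
        · intro hle
          exact fun hr => (h.mpr ⟨le_of_lt ht, hle⟩) hr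
      rw [hfil] at hcross
      have h2' := hclasses t ht
      have h3' := hsplit t
      show ((T.filter fun e => t ≤ u e).card : ℝ) ≤ ((T'.filter fun e => t ≤ m e).card : ℝ)
      have : (T.filter fun e => t ≤ u e).card ≤ (T'.filter fun e => t ≤ m e).card := by
        omega
      exact_mod_cast this
    have hint : M.value = ∫ t in Set.Ioi (0:ℝ), cardFun u T t := by
      show (∫ t in Set.Ioi (0:ℝ),
        ((Set.ncard (Quotient.mk (M.rel t) '' (Set.univ : Set R)) : ℝ) - 1)) = _
      exact MeasureTheory.setIntegral_congr_fun measurableSet_Ioi hvalEq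
    rw [hint, ← integral_cardFun m T' (fun e he => hmnn e (hT'd e he))]
    exact MeasureTheory.setIntegral_mono_on (cardFun_integrableOn u T)
      (cardFun_integrableOn m T') measurableSet_Ioi hpt
  -- (3) mstCost m ≤ mstCost u
  have h3 : mstCost m ≤ mstCost u := by
    rw [hmstU, hmstM]
    refine le_csInf ⟨_, hmemU⟩ ?_
    rintro w ⟨T', hT'd, hT'c, hT'card, rfl⟩
    calc sInf setM ≤ ∑ e ∈ T', m e := csInf_le hbddM ⟨T', hT'd, hT'c, hT'card, rfl⟩
      _ ≤ ∑ e ∈ T', u e := Finset.sum_le_sum (fun e he => hmleu e (hT'd e he))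
  exact ⟨le_antisymm h3 (le_trans h1 h2), le_antisymm h1 (le_trans h2 h3)⟩

end MSTProof

/-- For the merge plan `M_u` whose merge times are the min-max bound
determined by `u`, the minimum spanning tree cost of the complete graph on `R` with
respect to the merge times of `M_u` equals the minimum spanning tree cost with respect
to `u`, and both equal the value of `M_u`. -/
theorem mstCost_mergeTimes_eq_mstCost {R : Type*} [Fintype R] [Nonempty R]
    (u : Sym2 R → ℝ) (hu : ∀ e, 0 ≤ u e)
    (M : MergePlan R)
    (hM : ∀ x y : R, x ≠ y → M.mergeTime x y = minimax u x y)
    (m : Sym2 R → ℝ)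
    (hm : ∀ x y : R, x ≠ y → m s(x, y) = M.mergeTime x y) :
    mstCost m = mstCost u ∧ mstCost u = M.value := by
  exact MSTProof.main u hu M hM m hm
end

section
/- Let R be finite, u an upper bound, X ⊆ R nonempty, and let M_u be the merge plan attaining the min-max bound determined by u. Define the contracted upper bound u_X on R/X by u_X({a,b}) = u({a,b}) for a,b ∉ X and u_X({a, X}) = min_{x∈X} u({a,x}). Define the contracted merge plan M_u/X on R/X whose partition at time t arises from that of M_u by combining all parts intersecting X into a single part. Then M_u/X = M_{u_X}. -/
/-- The setoid on `R` identifying all elements of `X` (and nothing else). -/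
def contractSetoid {R : Type*} (X : Set R) : Setoid R where
  r a b := a = b ∨ (a ∈ X ∧ b ∈ X)
  iseqv := ⟨fun _ => Or.inl rfl,
    fun h => h.elim (fun e => Or.inl e.symm) (fun h' => Or.inr ⟨h'.2, h'.1⟩),
    fun h1 h2 => by
      rcases h1 with rfl | ⟨ha, hb⟩
      · exact h2
      · rcases h2 with rfl | ⟨_, hc⟩
        · exact Or.inr ⟨ha, hb⟩
        · exact Or.inr ⟨ha, hc⟩⟩

/-- Edge costs on the quotient of `R` by a setoid `sd`: the minimum of `d`
over all pairs of representatives. -/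
noncomputable def quotCost {R : Type*} (d : Sym2 R → ℝ) (sd : Setoid R) :
    Sym2 (Quotient sd) → ℝ :=
  fun e => sInf {v : ℝ | ∃ a b : R,
    s(Quotient.mk sd a, Quotient.mk sd b) = e ∧ v = d s(a, b)}

/-- `drop(X) = TMST - TMST_{/X}` for the terminal metric `d`. -/
noncomputable def dropCost {R : Type*} (d : Sym2 R → ℝ) (X : Set R) : ℝ :=
  mstCost d - mstCost (quotCost d (contractSetoid X))

section Helpers

variable {V : Type*}

private def pval (c : Sym2 V → ℝ) : V → List V → ℝ
  | _, [] => 0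
  | x, y :: l => max (c s(x, y)) (pval c y l)

private lemma pval_nonneg (c : Sym2 V → ℝ) : ∀ (l : List V) (x : V), 0 ≤ pval c x l
  | [], _ => le_refl 0
  | y :: l, x => le_trans (pval_nonneg c l y) (le_max_right _ _)

private lemma pval_eq (c : Sym2 V → ℝ) : ∀ (l : List V) (x : V),
    (((x :: l).zip l).map fun p => c s(p.1, p.2)).foldr max 0 = pval c x l
  | [], _ => rfl
  | y :: l, x => by
      simp only [List.zip_cons_cons, List.map_cons, List.foldr_cons, pval_eq c l y, pval]

private def pset (c : Sym2 V → ℝ) (x y : V) : Set ℝ :=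
  {m : ℝ | ∃ l : List V,
    List.Chain' (fun a b => a ≠ b) (x :: l) ∧
    (x :: l).getLast (List.cons_ne_nil x l) = y ∧
    m = pval c x l}

private lemma minimax_eq (c : Sym2 V → ℝ) (x y : V) :
    minimax c x y = sInf (pset c x y) := by
  unfold minimax pset
  congr 1
  ext m
  simp only [pval_eq]

private lemma pset_nonempty (c : Sym2 V → ℝ) (x y : V) : (pset c x y).Nonempty := by
  by_cases h : x = y
  · subst h
    exact ⟨pval c x [], [], List.isChain_singleton x, rfl, rfl⟩
  · exact ⟨pval c x [y], [y], List.isChain_pair.mpr h, rfl, rfl⟩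

private lemma pset_lb (c : Sym2 V → ℝ) (x y : V) : ∀ m ∈ pset c x y, (0:ℝ) ≤ m := by
  rintro m ⟨l, -, -, rfl⟩
  exact pval_nonneg c l x

private lemma pset_bdd (c : Sym2 V → ℝ) (x y : V) : BddBelow (pset c x y) :=
  ⟨0, pset_lb c x y⟩

private lemma pval_mem (c : Sym2 V → ℝ) :
    ∀ (l : List V) (x : V), pval c x l ∈ insert (0:ℝ) (Set.range c)
  | [], _ => Set.mem_insert 0 _
  | y :: l, x => by
      rcases max_choice (c s(x, y)) (pval c y l) with h | h
      · show max (c s(x,y)) (pval c y l) ∈ _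
        rw [h]; exact Set.mem_insert_iff.mpr (Or.inr ⟨_, rfl⟩)
      · show max (c s(x,y)) (pval c y l) ∈ _
        rw [h]; exact pval_mem c l y

private lemma pset_finite [Finite V] (c : Sym2 V → ℝ) (x y : V) : (pset c x y).Finite := by
  apply Set.Finite.subset ((Set.finite_range c).insert 0)
  rintro m ⟨l, -, -, rfl⟩
  exact pval_mem c l x

private lemma minimax_le (c : Sym2 V → ℝ) {x y : V} {l : List V}
    (hc : List.Chain' (fun a b => a ≠ b) (x :: l))
    (hl : (x :: l).getLast (List.cons_ne_nil x l) = y) :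
    minimax c x y ≤ pval c x l := by
  rw [minimax_eq]
  exact csInf_le (pset_bdd c x y) ⟨l, hc, hl, rfl⟩

private lemma minimax_nonneg (c : Sym2 V → ℝ) (x y : V) : 0 ≤ minimax c x y := by
  rw [minimax_eq]
  exact le_csInf (pset_nonempty c x y) (pset_lb c x y)

private lemma minimax_self (c : Sym2 V → ℝ) (x : V) : minimax c x x = 0 :=
  le_antisymm (minimax_le c (List.isChain_singleton x) rfl) (minimax_nonneg c x x)

private lemma minimax_exists [Finite V] (c : Sym2 V → ℝ) (x y : V) :
    ∃ l : List V, List.Chain' (fun a b => a ≠ b) (x :: l) ∧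
      (x :: l).getLast (List.cons_ne_nil x l) = y ∧ minimax c x y = pval c x l := by
  obtain ⟨l, hc, hl, hv⟩ := (pset_nonempty c x y).csInf_mem (pset_finite c x y)
  exact ⟨l, hc, hl, (minimax_eq c x y).trans hv⟩

private lemma minimax_le_edge_max (c : Sym2 V → ℝ) {x y : V} (h : x ≠ y) :
    minimax c x y ≤ max (c s(x, y)) 0 :=
  minimax_le c (List.isChain_pair.mpr h) rfl

private lemma minimax_cons [Finite V] (c : Sym2 V → ℝ) {x a : V} (z : V) (h : x ≠ a) :
    minimax c x z ≤ max (c s(x, a)) (minimax c a z) := by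
  obtain ⟨l, h1, h2, h3⟩ := minimax_exists c a z
  have hc : List.Chain' (fun p q => p ≠ q) (x :: a :: l) := List.isChain_cons_cons.mpr ⟨h, h1⟩
  have hl : (x :: a :: l).getLast (List.cons_ne_nil _ _) = z := by
    rw [List.getLast_cons (List.cons_ne_nil a l)]; exact h2
  have := minimax_le c hc hl
  rw [h3]
  exact this

private lemma minimax_glue_aux [Finite V] (c : Sym2 V → ℝ) (y z : V) :
    ∀ (l : List V) (x : V), List.Chain' (fun a b => a ≠ b) (x :: l) →
      (x :: l).getLast (List.cons_ne_nil x l) = y →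
      minimax c x z ≤ max (pval c x l) (minimax c y z)
  | [], x => by
      intro _ hl
      have hxy : x = y := hl
      subst hxy
      exact le_max_right _ _
  | a :: l, x => by
      intro hc hl
      replace hc := List.isChain_cons_cons.mp hc
      have hl' : (a :: l).getLast (List.cons_ne_nil a l) = y := by
        rw [← List.getLast_cons (List.cons_ne_nil a l)]; exact hl
      have ih := minimax_glue_aux c y z l a hc.2 hl'
      calc minimax c x z ≤ max (c s(x, a)) (minimax c a z) := minimax_cons c z hc.1
        _ ≤ max (c s(x, a)) (max (pval c a l) (minimax c y z)) :=
            max_le_max le_rfl ih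
        _ = max (max (c s(x, a)) (pval c a l)) (minimax c y z) := (max_assoc _ _ _).symm
        _ = max (pval c x (a :: l)) (minimax c y z) := rfl

private lemma minimax_glue [Finite V] (c : Sym2 V → ℝ) (x y z : V) :
    minimax c x z ≤ max (minimax c x y) (minimax c y z) := by
  obtain ⟨l, hc, hl, hv⟩ := minimax_exists c x y
  rw [hv]
  exact minimax_glue_aux c y z l x hc hl

end Helpers

section Contract

variable {R : Type*} [Fintype R] (u : Sym2 R → ℝ) (X : Set R)
  (uX : Sym2 (Quotient (contractSetoid X)) → ℝ)

private lemma qmk_eq_of_mem {a b : R} (ha : a ∈ X) (hb : b ∈ X) :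
    Quotient.mk (contractSetoid X) a = Quotient.mk (contractSetoid X) b :=
  Quotient.sound (Or.inr ⟨ha, hb⟩)

variable (hu : ∀ e, 0 ≤ u e)
  (h1 : ∀ a b : R, a ∉ X → b ∉ X →
    uX s(Quotient.mk (contractSetoid X) a, Quotient.mk (contractSetoid X) b) = u s(a, b))
  (h2 : ∀ a : R, a ∉ X → ∀ b : R, b ∈ X →
    uX s(Quotient.mk (contractSetoid X) a, Quotient.mk (contractSetoid X) b) =
      sInf {v : ℝ | ∃ x ∈ X, v = u s(a, x)})

include hu h2 in
private lemma edge_attained {a b : R} (ha : a ∉ X) (hb : b ∈ X) :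
    ∃ x ∈ X, uX s(Quotient.mk (contractSetoid X) a, Quotient.mk (contractSetoid X) b)
      = u s(a, x) := by
  rw [h2 a ha b hb]
  have hset : {v : ℝ | ∃ x ∈ X, v = u s(a, x)} = (fun x => u s(a, x)) '' X := by
    ext v
    constructor
    · rintro ⟨x, hx, rfl⟩; exact ⟨x, hx, rfl⟩
    · rintro ⟨x, hx, rfl⟩; exact ⟨x, hx, rfl⟩
  have hne : {v : ℝ | ∃ x ∈ X, v = u s(a, x)}.Nonempty := ⟨u s(a, b), b, hb, rfl⟩
  have hfin : {v : ℝ | ∃ x ∈ X, v = u s(a, x)}.Finite := by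
    rw [hset]; exact X.toFinite.image _
  exact hne.csInf_mem hfin

include hu h1 h2 in
private lemma edge_le {a b : R}
    (hab : Quotient.mk (contractSetoid X) a ≠ Quotient.mk (contractSetoid X) b) :
    uX s(Quotient.mk (contractSetoid X) a, Quotient.mk (contractSetoid X) b) ≤ u s(a, b) := by
  by_cases ha : a ∈ X <;> by_cases hb : b ∈ X
  · exact absurd (qmk_eq_of_mem X ha hb) hab
  · rw [Sym2.eq_swap, h2 b hb a ha]
    refine csInf_le ⟨0, ?_⟩ ⟨a, ha, by rw [Sym2.eq_swap]⟩
    rintro v ⟨x, hx, rfl⟩; exact hu _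
  · rw [h2 a ha b hb]
    refine csInf_le ⟨0, ?_⟩ ⟨b, hb, rfl⟩
    rintro v ⟨x, hx, rfl⟩; exact hu _
  · rw [h1 a b ha hb]

include hu h1 h2 in
private lemma proj_le (b : R) :
    ∀ (l : List R) (a : R), List.Chain' (fun p q => p ≠ q) (a :: l) →
      (a :: l).getLast (List.cons_ne_nil a l) = b →
      minimax uX (Quotient.mk (contractSetoid X) a) (Quotient.mk (contractSetoid X) b)
        ≤ pval u a l
  | [], a => by
      intro _ hl
      have hab : a = b := hl
      subst hab
      exact le_of_eq (minimax_self uX _)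
  | c :: l, a => by
      intro hc hl
      replace hc := List.isChain_cons_cons.mp hc
      have hl' : (c :: l).getLast (List.cons_ne_nil c l) = b := by
        rw [← List.getLast_cons (List.cons_ne_nil c l)]; exact hl
      have ih := proj_le b l c hc.2 hl'
      show _ ≤ max (u s(a, c)) (pval u c l)
      by_cases hq : Quotient.mk (contractSetoid X) a = Quotient.mk (contractSetoid X) c
      · rw [hq]
        exact ih.trans (le_max_right _ _)
      · calc minimax uX _ _
            ≤ max (uX s(Quotient.mk (contractSetoid X) a, Quotient.mk (contractSetoid X) c))
              (minimax uX (Quotient.mk (contractSetoid X) c)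
                (Quotient.mk (contractSetoid X) b)) := minimax_cons uX _ hq
          _ ≤ max (u s(a, c)) (pval u c l) :=
              max_le_max (edge_le u X uX hu h1 h2 hq) ih

include hu h1 h2 in
private lemma proj_le' (a b : R) :
    minimax uX (Quotient.mk (contractSetoid X) a) (Quotient.mk (contractSetoid X) b)
      ≤ minimax u a b := by
  obtain ⟨l, hc, hl, hv⟩ := minimax_exists u a b
  rw [hv]
  exact proj_le u X uX hu h1 h2 b l a hc hl

include hu h1 h2 in
private lemma lift_le (b : R) :
    ∀ (l : List (Quotient (contractSetoid X))) (a : R),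
      List.Chain' (fun p q => p ≠ q) (Quotient.mk (contractSetoid X) a :: l) →
      (Quotient.mk (contractSetoid X) a :: l).getLast (List.cons_ne_nil _ l)
        = Quotient.mk (contractSetoid X) b →
      minimax u a b ≤ pval uX (Quotient.mk (contractSetoid X) a) l ∨
        ((∃ x ∈ X, minimax u a x ≤ pval uX (Quotient.mk (contractSetoid X) a) l) ∧
         (∃ x ∈ X, minimax u x b ≤ pval uX (Quotient.mk (contractSetoid X) a) l))
  | [], a => by
      intro _ hl
      have hab : Quotient.mk (contractSetoid X) a = Quotient.mk (contractSetoid X) b := hl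
      rcases Quotient.exact hab with rfl | ⟨haX, hbX⟩
      · exact Or.inl (le_of_eq (minimax_self u a))
      · exact Or.inr ⟨⟨a, haX, le_of_eq (minimax_self u a)⟩,
          ⟨b, hbX, le_of_eq (minimax_self u b)⟩⟩
  | q :: l, a => by
      intro hc hl
      obtain ⟨c, rfl⟩ := Quotient.exists_rep q
      replace hc := List.isChain_cons_cons.mp hc
      obtain ⟨hac, hc'⟩ := hc
      have hl' : (Quotient.mk (contractSetoid X) c :: l).getLast (List.cons_ne_nil _ l)
          = Quotient.mk (contractSetoid X) b := by
        rw [← List.getLast_cons (List.cons_ne_nil _ l)]; exact hl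
      have ih := lift_le b l c hc' hl'
      set V' := pval uX (Quotient.mk (contractSetoid X) c) l with hV'
      show minimax u a b ≤ max (uX s(Quotient.mk (contractSetoid X) a,
          Quotient.mk (contractSetoid X) c)) V' ∨ _
      set E := uX s(Quotient.mk (contractSetoid X) a, Quotient.mk (contractSetoid X) c) with hE
      have hEV : E ≤ max E V' := le_max_left _ _
      have hV'V : V' ≤ max E V' := le_max_right _ _
      have hV0 : (0:ℝ) ≤ max E V' := le_trans (pval_nonneg uX l (Quotient.mk (contractSetoid X) c)) hV'V
      by_cases haX : a ∈ X <;> by_cases hcX : c ∈ X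
      · exact absurd (qmk_eq_of_mem X haX hcX) hac
      · -- a ∈ X, c ∉ X
        obtain ⟨x₀, hx₀, hx₀e⟩ := edge_attained u X uX hu h2 hcX haX
        have hEe : E = u s(c, x₀) := by rw [hE, Sym2.eq_swap]; exact hx₀e
        have hcx₀ : c ≠ x₀ := fun h => hcX (h ▸ hx₀)
        have hmx₀c : minimax u x₀ c ≤ max E V' := by
          calc minimax u x₀ c ≤ max (u s(x₀, c)) 0 := minimax_le_edge_max u (Ne.symm hcx₀)
            _ = u s(x₀, c) := max_eq_left (hu _)
            _ = u s(c, x₀) := by rw [Sym2.eq_swap]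
            _ = E := hEe.symm
            _ ≤ max E V' := hEV
        refine Or.inr ⟨⟨a, haX, le_trans (le_of_eq (minimax_self u a)) hV0⟩, ?_⟩
        rcases ih with h | ⟨_, ⟨x', hx', h₂'⟩⟩
        · exact ⟨x₀, hx₀, (minimax_glue u x₀ c b).trans
            (max_le hmx₀c (h.trans hV'V))⟩
        · exact ⟨x', hx', h₂'.trans hV'V⟩
      · -- a ∉ X, c ∈ X
        obtain ⟨x₀, hx₀, hx₀e⟩ := edge_attained u X uX hu h2 haX hcX
        have hax₀ : a ≠ x₀ := fun h => haX (h ▸ hx₀)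
        have hmax₀ : minimax u a x₀ ≤ max E V' := by
          calc minimax u a x₀ ≤ max (u s(a, x₀)) 0 := minimax_le_edge_max u hax₀
            _ = u s(a, x₀) := max_eq_left (hu _)
            _ = E := hx₀e.symm
            _ ≤ max E V' := hEV
        refine Or.inr ⟨⟨x₀, hx₀, hmax₀⟩, ?_⟩
        rcases ih with h | ⟨_, ⟨x', hx', h₂'⟩⟩
        · exact ⟨c, hcX, h.trans hV'V⟩
        · exact ⟨x', hx', h₂'.trans hV'V⟩
      · -- a ∉ X, c ∉ X
        have hane : a ≠ c := fun h => hac (by rw [h])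
        have hEe : E = u s(a, c) := h1 a c haX hcX
        have hmac : minimax u a c ≤ max E V' := by
          calc minimax u a c ≤ max (u s(a, c)) 0 := minimax_le_edge_max u hane
            _ = u s(a, c) := max_eq_left (hu _)
            _ = E := hEe.symm
            _ ≤ max E V' := hEV
        rcases ih with h | ⟨⟨x, hx, hx1⟩, ⟨x', hx', hx2⟩⟩
        · exact Or.inl ((minimax_glue u a c b).trans (max_le hmac (h.trans hV'V)))
        · exact Or.inr ⟨⟨x, hx, (minimax_glue u a c x).trans
            (max_le hmac (hx1.trans hV'V))⟩, ⟨x', hx', hx2.trans hV'V⟩⟩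

end Contract

/-- Contracting a nonempty terminal set `X` in the merge plan `M_u`
(the plan whose merge times are the min-max bound determined by `u`) yields the merge
plan `M_{u_X}` on `R/X`, where `u_X({a,b}) = u({a,b})` for `a, b ∉ X` and
`u_X({a, X}) = min_{x ∈ X} u({a,x})`. -/
theorem contract_minimax_mergePlan {R : Type*} [Fintype R]
    (u : Sym2 R → ℝ) (hu : ∀ e, 0 ≤ u e)
    (X : Set R) (hX : X.Nonempty)
    (M : MergePlan R)
    (hM : ∀ x y : R, x ≠ y → M.mergeTime x y = minimax u x y)
    (M' : MergePlan (Quotient (contractSetoid X)))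
    (hM' : ∀ t : ℝ, 0 ≤ t → ∀ a b : R,
      ((M'.rel t).r (Quotient.mk (contractSetoid X) a) (Quotient.mk (contractSetoid X) b) ↔
        ((M.rel t).r a b ∨
          ((∃ x ∈ X, (M.rel t).r a x) ∧ (∃ x ∈ X, (M.rel t).r x b)))))
    (uX : Sym2 (Quotient (contractSetoid X)) → ℝ)
    (h1 : ∀ a b : R, a ∉ X → b ∉ X →
      uX s(Quotient.mk (contractSetoid X) a, Quotient.mk (contractSetoid X) b) = u s(a, b))
    (h2 : ∀ a : R, a ∉ X → ∀ b : R, b ∈ X →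
      uX s(Quotient.mk (contractSetoid X) a, Quotient.mk (contractSetoid X) b) =
        sInf {v : ℝ | ∃ x ∈ X, v = u s(a, x)}) :
    ∀ q q' : Quotient (contractSetoid X), q ≠ q' →
      M'.mergeTime q q' = minimax uX q q' := by
  intro q q' hqq'
  obtain ⟨a, rfl⟩ := Quotient.exists_rep q
  obtain ⟨b, rfl⟩ := Quotient.exists_rep q'
  have hab : a ≠ b := fun h => hqq' (by rw [h])
  set m := M'.mergeTime (Quotient.mk (contractSetoid X) a) (Quotient.mk (contractSetoid X) b)
    with hmdef
  set T := minimax uX (Quotient.mk (contractSetoid X) a) (Quotient.mk (contractSetoid X) b)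
    with hTdef
  have hm0 : 0 ≤ m := M'.mergeTime_nonneg _ _ hqq'
  have hT0 : 0 ≤ T := minimax_nonneg uX _ _
  -- refl facts
  have hrefl : ∀ (t : ℝ) (x : R), (M.rel t).r x x := fun t x => (M.rel t).iseqv.refl x
  have hdir1 : m ≤ T := by
    have hnr : ¬ (M'.rel m).r (Quotient.mk (contractSetoid X) a)
        (Quotient.mk (contractSetoid X) b) :=
      (M'.rel_iff m _ _ hqq').mpr ⟨hm0, le_rfl⟩
    rw [hM' m hm0 a b] at hnr
    have hnab : ¬ (M.rel m).r a b := fun h => hnr (Or.inl h)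
    have hnpq : ¬ ((∃ x ∈ X, (M.rel m).r a x) ∧ (∃ x ∈ X, (M.rel m).r x b)) :=
      fun h => hnr (Or.inr h)
    have hmab : m ≤ minimax u a b := by
      have := ((M.rel_iff m a b hab).mp hnab).2
      rwa [hM a b hab] at this
    have hor : (¬ ∃ x ∈ X, (M.rel m).r a x) ∨ (¬ ∃ x ∈ X, (M.rel m).r x b) :=
      not_and_or.mp hnpq
    obtain ⟨l, hc, hl, hv⟩ := minimax_exists uX (Quotient.mk (contractSetoid X) a)
      (Quotient.mk (contractSetoid X) b)
    have hlift := lift_le u X uX hu h1 h2 b l a hc hl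
    rw [← hv] at hlift
    rcases hlift with h | ⟨⟨x, hx, hx1⟩, ⟨x', hx', hx2⟩⟩
    · exact hmab.trans h
    · rcases hor with hP | hQ
      · have hax : a ≠ x := fun h => hP ⟨x, hx, h ▸ hrefl m a⟩
        have : m ≤ minimax u a x := by
          have hr : ¬ (M.rel m).r a x := fun h => hP ⟨x, hx, h⟩
          have := ((M.rel_iff m a x hax).mp hr).2
          rwa [hM a x hax] at this
        exact this.trans hx1
      · have hax : x' ≠ b := fun h => hQ ⟨x', hx', h ▸ hrefl m b⟩
        have : m ≤ minimax u x' b := by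
          have hr : ¬ (M.rel m).r x' b := fun h => hQ ⟨x', hx', h⟩
          have := ((M.rel_iff m x' b hax).mp hr).2
          rwa [hM x' b hax] at this
        exact this.trans hx2
  have hdir2 : T ≤ m := by
    rcases le_or_gt T 0 with hTle | hTpos
    · exact hTle.trans hm0
    · have hnr : ¬ (M'.rel T).r (Quotient.mk (contractSetoid X) a)
          (Quotient.mk (contractSetoid X) b) := by
        rw [hM' T hT0 a b]
        rintro (hrel | ⟨⟨x₀, hx₀, hr₁⟩, ⟨x₁, hx₁, hr₂⟩⟩)
        · have hTab : T ≤ minimax u a b := by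
            rw [hTdef]; exact proj_le' u X uX hu h1 h2 a b
          exact (M.rel_iff T a b hab).mpr ⟨hT0, by rwa [hM a b hab]⟩ hrel
        · -- both merged through X before time T : contradiction
          have hA : minimax u a x₀ < T := by
            by_cases hax : a = x₀
            · subst hax; rw [minimax_self]; exact hTpos
            · by_contra hle
              push_neg at hle
              exact (M.rel_iff T a x₀ hax).mpr ⟨hT0, by rwa [hM a x₀ hax]⟩ hr₁
          have hB : minimax u x₁ b < T := by
            by_cases hax : x₁ = b
            · subst hax; rw [minimax_self]; exact hTpos
            · by_contra hle
              push_neg at hle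
              exact (M.rel_iff T x₁ b hax).mpr ⟨hT0, by rwa [hM x₁ b hax]⟩ hr₂
          have hglue : T ≤ max (minimax u a x₀) (minimax u x₁ b) := by
            have g1 : T ≤ max
                (minimax uX (Quotient.mk (contractSetoid X) a)
                  (Quotient.mk (contractSetoid X) x₀))
                (minimax uX (Quotient.mk (contractSetoid X) x₀)
                  (Quotient.mk (contractSetoid X) b)) :=
              minimax_glue uX _ _ _
            have e01 : Quotient.mk (contractSetoid X) x₀ = Quotient.mk (contractSetoid X) x₁ :=
              qmk_eq_of_mem X hx₀ hx₁
            have g2 : minimax uX (Quotient.mk (contractSetoid X) a)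
                (Quotient.mk (contractSetoid X) x₀) ≤ minimax u a x₀ :=
              proj_le' u X uX hu h1 h2 a x₀
            have g3 : minimax uX (Quotient.mk (contractSetoid X) x₀)
                (Quotient.mk (contractSetoid X) b) ≤ minimax u x₁ b := by
              rw [e01]; exact proj_le' u X uX hu h1 h2 x₁ b
            exact g1.trans (max_le_max g2 g3)
          have : T < T := lt_of_le_of_lt hglue (max_lt hA hB)
          exact absurd this (lt_irrefl T)
      exact ((M'.rel_iff T _ _ hqq').mp hnr).2
  exact le_antisymm hdir1 hdir2
end

section
/- Let M = (S^t)_{t≥0} be a merge plan on a terminal set R, let t* ≥ 0, let S ∈ S^{t*} be a part of the partition at time t*, and let X ⊆ S and X̄ ⊆ R \ S be nonempty terminal sets. Then value(M, X ∪ X̄) ≥ value(M, X) + value(M, X̄) + t*. -/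
set_option linter.unusedSectionVars false
namespace MergePlan

variable {R : Type*} [Fintype R] (M : MergePlan R)

lemma rel_mono {s t : ℝ} (hs : 0 ≤ s) (hst : s ≤ t) {x y : R}
    (h : (M.rel s).r x y) : (M.rel t).r x y := by
  by_cases hxy : x = y
  · subst hxy; exact (M.rel t).refl x
  · by_contra h'
    obtain ⟨-, htd⟩ := (M.rel_iff t x y hxy).mp h'
    exact (M.rel_iff s x y hxy).mpr ⟨hs, hst.trans htd⟩ h

noncomputable def n (X : Set R) (t : ℝ) : ℕ := (Quotient.mk (M.rel t) '' X).ncard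

lemma n_le_card (X : Set R) (t : ℝ) : M.n X t ≤ X.ncard :=
  Set.ncard_image_le X.toFinite

lemma n_anti {X : Set R} {s t : ℝ} (hs : 0 ≤ s) (hst : s ≤ t) :
    M.n X t ≤ M.n X s := by
  have h : ∀ a b : R, (M.rel s).r a b →
      Quotient.mk (M.rel t) a = Quotient.mk (M.rel t) b :=
    fun a b hab => Quotient.sound (M.rel_mono hs hst hab)
  have him : Quotient.mk (M.rel t) '' X =
      (Quotient.lift (Quotient.mk (M.rel t)) h) '' (Quotient.mk (M.rel s) '' X) := by
    rw [Set.image_image]; rfl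
  rw [n, him]
  exact Set.ncard_image_le (Set.toFinite _)

lemma n_pos {X : Set R} (hX : X.Nonempty) (t : ℝ) : 1 ≤ M.n X t :=
  (Set.ncard_pos (Set.toFinite _)).mpr (hX.image _)

lemma n_eq_one {X : Set R} (hX : X.Nonempty) {T t : ℝ}
    (hT : ∀ x y : R, M.mergeTime x y ≤ T) (ht : T < t) : M.n X t = 1 := by
  obtain ⟨x₀, hx₀⟩ := hX
  have : Quotient.mk (M.rel t) '' X = {Quotient.mk (M.rel t) x₀} := by
    apply Set.eq_singleton_iff_nonempty_unique_mem.mpr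
    refine ⟨⟨_, x₀, hx₀, rfl⟩, ?_⟩
    rintro q ⟨x, hx, rfl⟩
    apply Quotient.sound
    by_cases hxy : x = x₀
    · subst hxy; exact (M.rel t).refl x
    · by_contra h'
      obtain ⟨-, htd⟩ := (M.rel_iff t x x₀ hxy).mp h'
      exact absurd (htd.trans (hT x x₀)) (not_le.mpr ht)
  rw [n, this, Set.ncard_singleton]

noncomputable def g (X : Set R) (t : ℝ) : ℝ := (M.n X t : ℝ) - 1

noncomputable def F (X : Set R) (t : ℝ) : ℝ :=
  if t < 0 then (X.ncard : ℝ) - 1 else M.g X t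

lemma F_anti (X : Set R) : Antitone (M.F X) := by
  intro s t hst
  unfold F g
  by_cases ht : t < 0
  · rw [if_pos ht, if_pos (lt_of_le_of_lt hst ht)]
  · rw [if_neg ht]
    by_cases hs : s < 0
    · rw [if_pos hs]
      exact sub_le_sub_right (Nat.cast_le.mpr (M.n_le_card X t)) 1
    · rw [if_neg hs]
      exact sub_le_sub_right (Nat.cast_le.mpr (M.n_anti (not_lt.mp hs) hst)) 1

lemma F_eq {X : Set R} {t : ℝ} (ht : 0 < t) : M.F X t = M.g X t :=
  if_neg (not_lt.mpr ht.le)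

lemma F_bound (X : Set R) (t : ℝ) : ‖M.F X t‖ ≤ (X.ncard : ℝ) + 1 := by
  rw [Real.norm_eq_abs]
  have h : ∀ k : ℕ, k ≤ X.ncard → |(k : ℝ) - 1| ≤ (X.ncard : ℝ) + 1 := by
    intro k hk
    calc |(k : ℝ) - 1| ≤ |(k : ℝ)| + |1| := abs_sub _ _
      _ ≤ (X.ncard : ℝ) + 1 := by
          rw [abs_one, abs_of_nonneg (Nat.cast_nonneg k)]
          exact add_le_add_left (Nat.cast_le.mpr hk) 1
  unfold F g
  split
  · exact h _ le_rfl
  · exact h _ (M.n_le_card X t)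

lemma integrableOn_F {X : Set R} (hX : X.Nonempty) {T : ℝ} (hT0 : 0 ≤ T)
    (hT : ∀ x y : R, M.mergeTime x y ≤ T) :
    MeasureTheory.IntegrableOn (M.F X) (Set.Ioi 0) := by
  have hsub : Set.Ioi (0:ℝ) ⊆ Set.Ioc 0 T ∪ Set.Ioi T := by
    intro t ht
    rcases le_or_gt t T with h | h
    · exact Or.inl ⟨ht, h⟩
    · exact Or.inr h
  refine MeasureTheory.IntegrableOn.mono_set (MeasureTheory.IntegrableOn.union ?_ ?_) hsub
  · refine MeasureTheory.Integrable.mono' (g := fun _ => (X.ncard : ℝ) + 1)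
      (MeasureTheory.integrableOn_const measure_Ioc_lt_top.ne)
      ((M.F_anti X).measurable.aestronglyMeasurable) ?_
    exact MeasureTheory.ae_of_all _ fun t => M.F_bound X t
  · have heq : Set.EqOn (fun _ : ℝ => (0:ℝ)) (M.F X) (Set.Ioi T) := by
      intro t ht
      have h1 : M.n X t = 1 := M.n_eq_one hX hT ht
      simp [F, g, not_lt.mpr (hT0.trans (le_of_lt ht)), h1]
    exact (MeasureTheory.integrableOn_zero).congr_fun heq measurableSet_Ioi

lemma integrableOn_g {X : Set R} (hX : X.Nonempty) {T : ℝ} (hT0 : 0 ≤ T)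
    (hT : ∀ x y : R, M.mergeTime x y ≤ T) :
    MeasureTheory.IntegrableOn (M.g X) (Set.Ioi 0) :=
  (M.integrableOn_F hX hT0 hT).congr_fun (fun _ ht => M.F_eq ht) measurableSet_Ioi

end MergePlan

/-- Let `M` be a merge plan on `R`, let `S` be a part of the partition
at time `t* ≥ 0`, and let `X ⊆ S` and `X̄ ⊆ R \ S` be nonempty terminal sets.  Then
`value(M, X ∪ X̄) ≥ value(M, X) + value(M, X̄) + t*`. -/
theorem localValue_union_ge {R : Type*} [Fintype R] (M : MergePlan R)
    (tstar : ℝ) (htstar : 0 ≤ tstar)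
    (S : Set R) (hS : ∃ a : R, S = {b : R | (M.rel tstar).r a b})
    (X : Set R) (hXS : X ⊆ S) (hX : X.Nonempty)
    (Y : Set R) (hYS : Y ⊆ Sᶜ) (hY : Y.Nonempty) :
    M.localValue X + M.localValue Y + tstar ≤ M.localValue (X ∪ Y) := by
  classical
  obtain ⟨a, hSa⟩ := hS
  obtain ⟨x₀, hx₀⟩ := hX
  haveI : Nonempty R := ⟨x₀⟩
  -- a global bound on merge times
  set T : ℝ := max 0 (Finset.univ.sup' Finset.univ_nonempty
      fun p : R × R => M.mergeTime p.1 p.2) with hTdef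
  have hT0 : (0:ℝ) ≤ T := le_max_left _ _
  have hT : ∀ x y : R, M.mergeTime x y ≤ T := fun x y =>
    le_max_of_le_right (Finset.le_sup' (fun p : R × R => M.mergeTime p.1 p.2)
      (Finset.mem_univ (x, y)))
  set ind : ℝ → ℝ := (Set.Ioc (0:ℝ) tstar).indicator (fun _ => (1:ℝ)) with hind
  -- pointwise inequality
  have key : ∀ t ∈ Set.Ioi (0:ℝ),
      M.g X t + M.g Y t + ind t ≤ M.g (X ∪ Y) t := by
    intro t ht
    rw [Set.mem_Ioi] at ht
    rcases le_or_gt t tstar with hle | hlt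
    · -- small times: images of X and Y are disjoint
      have hdisj : Disjoint (Quotient.mk (M.rel t) '' X) (Quotient.mk (M.rel t) '' Y) := by
        rw [Set.disjoint_left]
        rintro q ⟨x, hx, rfl⟩ ⟨y, hy, hq⟩
        have hyx : (M.rel t).r y x := Quotient.exact hq
        have hyx' : (M.rel tstar).r y x := M.rel_mono ht.le hle hyx
        have hax : (M.rel tstar).r a x := by
          have := hXS hx; rw [hSa] at this; exact this
        have hay : (M.rel tstar).r a y := (M.rel tstar).trans hax ((M.rel tstar).symm hyx')
        have : y ∈ S := by rw [hSa]; exact hay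
        exact hYS hy this
      have hcard : M.n (X ∪ Y) t = M.n X t + M.n Y t := by
        unfold MergePlan.n
        rw [Set.image_union]
        exact Set.ncard_union_eq hdisj (Set.toFinite _) (Set.toFinite _)
      have hind1 : ind t = 1 := Set.indicator_of_mem (Set.mem_Ioc.mpr ⟨ht, hle⟩) _
      rw [hind1]
      unfold MergePlan.g
      rw [hcard]
      push_cast
      ring_nf
      exact le_refl _
    · -- large times: X is in a single part
      have hind0 : ind t = 0 :=
        Set.indicator_of_notMem (fun h => absurd (Set.mem_Ioc.mp h).2 (not_le.mpr hlt)) _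
      have hXone : M.n X t = 1 := by
        have : Quotient.mk (M.rel t) '' X = {Quotient.mk (M.rel t) x₀} := by
          apply Set.eq_singleton_iff_nonempty_unique_mem.mpr
          refine ⟨⟨_, x₀, hx₀, rfl⟩, ?_⟩
          rintro q ⟨x, hx, rfl⟩
          apply Quotient.sound
          have hax : (M.rel tstar).r a x := by
            have := hXS hx; rw [hSa] at this; exact this
          have hax₀ : (M.rel tstar).r a x₀ := by
            have := hXS hx₀; rw [hSa] at this; exact this
          exact M.rel_mono htstar hlt.le ((M.rel tstar).trans ((M.rel tstar).symm hax) hax₀)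
        rw [MergePlan.n, this, Set.ncard_singleton]
      have hsub : M.n Y t ≤ M.n (X ∪ Y) t :=
        Set.ncard_le_ncard (Set.image_mono Set.subset_union_right) (Set.toFinite _)
      rw [hind0]
      unfold MergePlan.g
      rw [hXone]
      have : (M.n Y t : ℝ) ≤ (M.n (X ∪ Y) t : ℝ) := Nat.cast_le.mpr hsub
      push_cast
      linarith
  -- integrability
  have hiX : MeasureTheory.IntegrableOn (M.g X) (Set.Ioi 0) :=
    M.integrableOn_g ⟨x₀, hx₀⟩ hT0 hT
  have hiY : MeasureTheory.IntegrableOn (M.g Y) (Set.Ioi 0) :=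
    M.integrableOn_g hY hT0 hT
  have hiXY : MeasureTheory.IntegrableOn (M.g (X ∪ Y)) (Set.Ioi 0) :=
    M.integrableOn_g (Set.Nonempty.inl ⟨x₀, hx₀⟩) hT0 hT
  have hiind : MeasureTheory.IntegrableOn ind (Set.Ioi 0) := by
    apply MeasureTheory.Integrable.integrableOn
    rw [hind, MeasureTheory.integrable_indicator_iff measurableSet_Ioc]
    exact MeasureTheory.integrableOn_const measure_Ioc_lt_top.ne
  have hiXY2 : MeasureTheory.IntegrableOn
      (fun t => M.g X t + M.g Y t) (Set.Ioi 0) := hiX.add hiY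
  have hisum : MeasureTheory.IntegrableOn
      (fun t => M.g X t + M.g Y t + ind t) (Set.Ioi 0) := hiXY2.add hiind
  have hmono := MeasureTheory.setIntegral_mono_on hisum hiXY measurableSet_Ioi key
  have hsplit : ∫ t in Set.Ioi (0:ℝ), (M.g X t + M.g Y t + ind t) =
      (∫ t in Set.Ioi (0:ℝ), M.g X t) + (∫ t in Set.Ioi (0:ℝ), M.g Y t)
        + ∫ t in Set.Ioi (0:ℝ), ind t := by
    rw [MeasureTheory.integral_add hiXY2 hiind,
      MeasureTheory.integral_add hiX hiY]
  have hindint : ∫ t in Set.Ioi (0:ℝ), ind t = tstar := by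
    rw [hind, MeasureTheory.setIntegral_indicator measurableSet_Ioc,
      Set.inter_eq_self_of_subset_right Set.Ioc_subset_Ioi_self]
    simp [Real.volume_Ioc, ENNReal.toReal_ofReal htstar, htstar]
  rw [hsplit, hindint] at hmono
  exact hmono
end
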